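/- arXiv:0808.3023 — 7 statements merged into one kernel-verified Lean document; each statement's English description precedes it below -/
import Mathlib

section
/- If θ is an infinite cardinal and I is a linear order of cardinality greater than 2^θ, then I is θ⁺-wide; that is, there exists a sequence ⟨t_i : i < θ⁺⟩ of elements of I that is either strictly increasing or strictly decreasing (here θ⁺ is the successor cardinal of θ). -/
universe u

open Cardinal Ordinal Order Set

namespace Stmt0Aux

variable {I : Type u} [LinearOrder I] [Nonempty I]
variable {O : Type u} [LinearOrder O] [WellFoundedLT O]

set_option linter.unusedSectionVars false

/-- pick an element of a set -/
noncomputable def pick (T : Set I) : I :=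
  letI := Classical.dec T.Nonempty
  if h : T.Nonempty then h.choose else Classical.arbitrary I

lemma pick_mem {T : Set I} (h : T.Nonempty) : pick T ∈ T := by
  rw [pick]
  split_ifs
  exact h.choose_spec

/-- one splitting step -/
noncomputable def step (x : I) (T : Set I) : Set I :=
  if pick T < x then {y ∈ T | pick T < y}
  else if x < pick T then {y ∈ T | y < pick T}
  else {x}

lemma mem_step {x : I} {T : Set I} (hx : x ∈ T) : x ∈ step x T := by
  unfold step
  split_ifs with h1 h2
  · exact ⟨hx, h1⟩
  · exact ⟨hx, h2⟩
  · exact rfl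

/-- the nested intervals -/
noncomputable def A (x : I) : O → Set I :=
  WellFoundedLT.fix (fun ξ ih => ⋂ η, ⋂ h : η < ξ, step x (ih η h))

lemma A_def (x : I) (ξ : O) : A x ξ = ⋂ η, ⋂ _ : η < ξ, step x (A x η) :=
  WellFoundedLT.fix_eq _ ξ

lemma mem_A (x : I) (ξ : O) : x ∈ A x ξ := by
  induction ξ using WellFoundedLT.induction with
  | ind ξ ih =>
    rw [A_def]
    exact mem_iInter₂.2 fun η hη => mem_step (ih η hη)

lemma A_nonempty (x : I) (ξ : O) : (A x ξ).Nonempty := ⟨x, mem_A x ξ⟩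

lemma A_le_step {x : I} {η ξ : O} (h : η < ξ) : A x ξ ⊆ step x (A x η) := by
  rw [A_def]
  exact fun y hy => mem_iInter₂.1 hy η h

/-- the decision at stage ξ -/
noncomputable def d (x : I) (ξ : O) : Fin 3 :=
  if pick (A x ξ) < x then 0 else if x < pick (A x ξ) then 2 else 1

lemma pick_eq_of_d_eq_one {x : I} {ξ : O} (h : d x ξ = 1) : pick (A x ξ) = x := by
  unfold d at h
  split_ifs at h with h1 h2
  · exact absurd h (by decide)
  · exact absurd h (by decide)
  · exact le_antisymm (not_lt.1 h2) (not_lt.1 h1)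

lemma agree {x z : I} (hxz : x ≠ z) (ξ : O) (h : ∀ η < ξ, d x η = d z η) :
    A x ξ = (A z ξ : Set I) := by
  induction ξ using WellFoundedLT.induction with
  | ind ξ ih =>
    rw [A_def, A_def (x := z)]
    refine iInter_congr fun η => iInter_congr fun hη => ?_
    have hT : A x η = A z η := ih η hη fun η' hη' => h η' (hη'.trans hη)
    rw [← hT]
    simp only [step]
    set p := pick (A x η) with hp
    have hd : (if p < x then (0 : Fin 3) else if x < p then 2 else 1)
        = (if p < z then 0 else if z < p then 2 else 1) := by
      have hd0 := h η hη
      unfold d at hd0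
      rw [← hT] at hd0
      exact hd0
    rcases lt_trichotomy p x with h1 | h1 | h1 <;> rcases lt_trichotomy p z with h2 | h2 | h2
    · rw [if_pos h1, if_pos h2]
    · exfalso
      rw [if_pos h1, if_neg (by rw [← h2]; exact lt_irrefl p),
        if_neg (by rw [← h2]; exact lt_irrefl p)] at hd
      exact absurd hd (by decide)
    · exfalso
      rw [if_pos h1, if_neg (asymm h2), if_pos h2] at hd
      exact absurd hd (by decide)
    · exfalso
      rw [if_neg (by rw [← h1]; exact lt_irrefl p),
        if_neg (by rw [← h1]; exact lt_irrefl p), if_pos h2] at hd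
      exact absurd hd (by decide)
    · exact absurd (h1.symm.trans h2) hxz
    · exfalso
      rw [if_neg (by rw [← h1]; exact lt_irrefl p),
        if_neg (by rw [← h1]; exact lt_irrefl p), if_neg (asymm h2), if_pos h2] at hd
      exact absurd hd (by decide)
    · exfalso
      rw [if_neg (asymm h1), if_pos h1, if_pos h2] at hd
      exact absurd hd (by decide)
    · exfalso
      rw [if_neg (asymm h1), if_pos h1, if_neg (by rw [← h2]; exact lt_irrefl p),
        if_neg (by rw [← h2]; exact lt_irrefl p)] at hd
      exact absurd hd (by decide)
    · rw [if_neg (asymm h1), if_pos h1, if_neg (asymm h2), if_pos h2]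

end Stmt0Aux

open Stmt0Aux

theorem stmt0 (θ : Cardinal.{u}) (hθ : Cardinal.aleph0 ≤ θ)
    (I : Type u) [LinearOrder I] (hI : 2 ^ θ < Cardinal.mk I) :
    ∃ f : (Order.succ θ).ord.ToType → I, StrictMono f ∨ StrictAnti f := by
  have hne : Nonempty I := Cardinal.mk_ne_zero_iff.1 (zero_le.trans_lt hI).ne'
  set O := (Order.succ θ).ord.ToType with hO
  haveI : IsWellOrder O (· < ·) :=
    isWellOrder_lt
  have hmkO : #O = Order.succ θ := by rw [hO, Cardinal.mk_toType, Cardinal.card_ord]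
  have h2θ : Cardinal.aleph0 ≤ 2 ^ θ := hθ.trans (Cardinal.cantor θ).le
  have hsucc : Order.succ θ ≤ 2 ^ θ := Order.succ_le_of_lt (Cardinal.cantor θ)
  have hIio : ∀ ξ : O, #{η : O // η < ξ} ≤ θ := by
    intro ξ
    have h1 := Ordinal.typein_lt_type ((· < ·) : O → O → Prop) ξ
    rw [Ordinal.type_toType] at h1
    change (Ordinal.typein ((· < ·) : O → O → Prop) ξ).card ≤ θ
    exact Order.lt_succ_iff.1 (Cardinal.lt_ord.1 h1)
  by_cases hterm : ∀ x : I, ∃ ξ : O, d x ξ = 1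
  · -- termination case: I is small, contradiction
    exfalso
    set r : I → O := fun x => (hterm x).choose with hr
    have hr1 : ∀ x, d x (r x) = 1 := fun x => (hterm x).choose_spec
    set F : I → Σ ξ : O, ({η : O // η < ξ} → ULift.{u} (Fin 3)) :=
      fun x => ⟨r x, fun η => ⟨d x η.1⟩⟩ with hF
    have hFinj : Function.Injective F := by
      intro x z hxz
      by_contra hne'
      have h1 : r x = r z := congrArg Sigma.fst hxz
      have hd : ∀ η < r x, d x η = d z η := by
        intro η hη
        have hη' : η < r z := h1 ▸ hη
        have h2 := congrArg
          (fun s : Σ ξ : O, ({η : O // η < ξ} → ULift.{u} (Fin 3)) =>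
            if h : η < s.1 then (s.2 ⟨η, h⟩).down else 0) hxz
        simpa [F, hη, hη'] using h2
      have hA := agree hne' (r x) hd
      have hx1 := pick_eq_of_d_eq_one (hr1 x)
      have hz1 := pick_eq_of_d_eq_one (hr1 z)
      rw [← h1, ← hA] at hz1
      exact hne' (hx1.symm.trans hz1)
    have h3le : #(ULift.{u} (Fin 3)) ≤ 2 ^ θ := by
      have : #(ULift.{u} (Fin 3)) = 3 := by simp
      rw [this]
      exact le_trans (le_of_lt (by exact_mod_cast Cardinal.nat_lt_aleph0 3)) h2θ
    have hcount : #I ≤ 2 ^ θ := by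
      calc #I ≤ #(Σ ξ : O, ({η : O // η < ξ} → ULift.{u} (Fin 3))) := Cardinal.mk_le_of_injective hFinj
        _ = Cardinal.sum (fun ξ : O => #({η : O // η < ξ} → ULift.{u} (Fin 3))) := Cardinal.mk_sigma _
        _ ≤ Cardinal.sum (fun _ : O => 2 ^ θ) := by
            refine Cardinal.sum_le_sum _ _ fun ξ => ?_
            rw [← Cardinal.power_def]
            calc #(ULift.{u} (Fin 3)) ^ #{η : O // η < ξ}
                ≤ (2 ^ θ) ^ #{η : O // η < ξ} := Cardinal.power_le_power_right h3le
              _ ≤ (2 ^ θ) ^ θ :=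
                  Cardinal.power_le_power_left (Cardinal.aleph0_pos.trans_le h2θ).ne' (hIio ξ)
              _ = 2 ^ (θ * θ) := Cardinal.power_mul.symm
              _ = 2 ^ θ := by rw [Cardinal.mul_eq_self hθ]
        _ = #O * 2 ^ θ := Cardinal.sum_const' O (2 ^ θ)
        _ ≤ 2 ^ θ * 2 ^ θ := mul_le_mul_left (hmkO ▸ hsucc) _
        _ = 2 ^ θ := Cardinal.mul_eq_self h2θ
    exact absurd hI (not_lt.2 hcount)
  · -- non-termination: extract a monotone sequence
    push_neg at hterm
    obtain ⟨x, hx⟩ := hterm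
    set p : O → I := fun ξ => pick (A x ξ) with hp
    have hpmem : ∀ ξ, p ξ ∈ A x ξ := fun ξ => pick_mem (A_nonempty x ξ)
    have hpne : ∀ ξ, p ξ ≠ x := by
      intro ξ h
      apply hx ξ
      unfold d
      rw [show pick (A x ξ) = p ξ from rfl, h]
      simp
    have key : ∀ {η ξ : O}, η < ξ →
        (p η < x → p η < p ξ) ∧ (x < p η → p ξ < p η) := by
      intro η ξ hηξ
      have hmem := A_le_step (x := x) hηξ (hpmem ξ)
      constructor
      · intro h1
        rw [step, if_pos h1] at hmem
        exact hmem.2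
      · intro h1
        rw [step, if_neg (not_lt.2 h1.le), if_pos h1] at hmem
        exact hmem.2
    set L : Set O := {ξ | p ξ < x} with hL
    set R : Set O := {ξ | x < p ξ} with hR
    have hLR : L ∪ R = Set.univ := by
      ext ξ
      simp only [hL, hR, mem_union, mem_setOf_eq, mem_univ, iff_true]
      rcases lt_trichotomy (p ξ) x with h | h | h
      · exact Or.inl h
      · exact absurd h (hpne ξ)
      · exact Or.inr h
    have hbig : Order.succ θ ≤ #L ∨ Order.succ θ ≤ #R := by
      by_contra hcon
      push_neg at hcon
      have h1 : #L ≤ θ := Order.lt_succ_iff.1 hcon.1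
      have h2 : #R ≤ θ := Order.lt_succ_iff.1 hcon.2
      have hsmall : #O ≤ θ := by
        calc #O = #(L ∪ R : Set O) := by rw [hLR, Cardinal.mk_univ]
          _ ≤ #L + #R := Cardinal.mk_union_le _ _
          _ ≤ θ + θ := add_le_add h1 h2
          _ = θ := Cardinal.add_eq_self hθ
      rw [hmkO] at hsmall
      exact (Order.lt_succ θ).not_ge hsmall
    have hembed : ∀ S : Set O, Order.succ θ ≤ #S → ∃ e : O → S, StrictMono e := by
      intro S hS
      have hle : (Order.succ θ).ord ≤ Ordinal.type ((· < ·) : S → S → Prop) := by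
        rw [Cardinal.ord_le, Ordinal.card_type]
        exact hS
      have hle2 : Ordinal.type ((· < ·) : O → O → Prop)
          ≤ Ordinal.type ((· < ·) : S → S → Prop) :=
        le_trans (le_of_eq (Ordinal.type_toType _)) hle
      obtain ⟨e⟩ := Ordinal.type_le_iff'.1 hle2
      exact ⟨e, fun a b hab => e.map_rel_iff.2 hab⟩
    rcases hbig with hbig | hbig
    · obtain ⟨e, he⟩ := hembed L hbig
      refine ⟨fun ξ => p (e ξ), Or.inl fun a b hab => ?_⟩
      exact (key (Subtype.coe_lt_coe.2 (he hab))).1 (e a).2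
    · obtain ⟨e, he⟩ := hembed R hbig
      refine ⟨fun ξ => p (e ξ), Or.inr fun a b hab => ?_⟩
      exact (key (Subtype.coe_lt_coe.2 (he hab))).2 (e a).2
end

section
/- For every linear order I₁ there exists a linear order I₂ such that: I₂ ∈ K^flin, the cardinality of I₂ equals |I₁| + ℵ₀, I₁ is (isomorphic to) a suborder of I₂ with I₁ ≤*_{K^flin} I₂, and moreover every suborder I₀ of I₁ with I₀ ∈ K^flin satisfies I₀ ≤_{K^flin} I₂. -/
universe u

namespace Shelah734

/-- The class `K^flin`: infinite linear orders with no first and no last element,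
all of whose nonempty open intervals have full cardinality. -/
def KflinOrder (α : Type*) [LinearOrder α] : Prop :=
  Infinite α ∧ NoMinOrder α ∧ NoMaxOrder α ∧
    ∀ a b : α, a < b → (Set.Ioo a b).Nonempty →
      Cardinal.mk (Set.Ioo a b) = Cardinal.mk α

/-- For a suborder (subset) `A` of `β`: `A ≤*_{K^flin} β`. -/
def LeStarFlin {β : Type*} [LinearOrder β] (A : Set β) : Prop :=
  A = Set.univ ∨
    ((∀ x y : β, x < y → ∃ z, z ∉ A ∧ x < z ∧ z < y) ∧
      ∀ t ∉ A,
        Nonempty (↥A ↪o ↥{s : β | s ∉ A ∧ ∀ r ∈ A, (s < r ↔ t < r)}))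

/-! ### Auxiliary construction -/

open Finsupp

/-- Middle factor used in the construction. -/
abbrev EE (I₁ : Type u) [LinearOrder I₁] : Type u := Lex (I₁ ⊕ Lex (PUnit.{u+1} ⊕ I₁))

/-- A densely ordered linear order of cardinality `#I₁ + ℵ₀` with a distinguished
non-extremal point (its zero), containing copies of `I₁` above and below the zero. -/
abbrev CC (I₁ : Type u) [LinearOrder I₁] : Type u := Lex (EE I₁ × ℚ)

noncomputable instance {I₁ : Type u} [LinearOrder I₁] : Zero (CC I₁) :=
  ⟨toLex (toLex (Sum.inr (toLex (Sum.inl PUnit.unit))), 0)⟩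

/-- The ambient order: lexicographically ordered finitely supported functions `ℕ →₀ CC I₁`. -/
abbrev QQ (I₁ : Type u) [LinearOrder I₁] : Type u := Lex (ℕ →₀ CC I₁)

section
variable {I₁ : Type u} [LinearOrder I₁]

def ctr (e : EE I₁) (q : ℚ) : CC I₁ := toLex (e, q)
def e₀ : EE I₁ := toLex (Sum.inr (toLex (Sum.inl PUnit.unit)))
def pos (a : I₁) : CC I₁ := ctr (toLex (Sum.inr (toLex (Sum.inr a)))) 0
def posu : CC I₁ := ctr e₀ 1
def negu : CC I₁ := ctr e₀ (-1)
def neg (a : I₁) : CC I₁ := ctr (toLex (Sum.inl a)) 0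

lemma zero_def : (0 : CC I₁) = ctr e₀ 0 := rfl
lemma ctr_lt_ctr {e e' : EE I₁} {q q' : ℚ} : ctr e q < ctr e' q' ↔ e < e' ∨ (e = e' ∧ q < q') :=
  Prod.Lex.lt_iff
lemma ctr_inj {e e' : EE I₁} {q q' : ℚ} (h : ctr e q = ctr e' q') : e = e' ∧ q = q' := by
  have := congrArg ofLex h; exact ⟨congrArg Prod.fst this, congrArg Prod.snd this⟩

lemma neg_lt_zero' (a : I₁) : neg a < (0 : CC I₁) := by
  rw [zero_def, neg, ctr_lt_ctr]
  exact Or.inl (Sum.Lex.inl_lt_inr _ _)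
lemma zero_lt_pos' (a : I₁) : (0 : CC I₁) < pos a := by
  rw [zero_def, pos, ctr_lt_ctr]
  exact Or.inl ((Sum.Lex.inr_lt_inr_iff).2 (Sum.Lex.inl_lt_inr _ _))
lemma zero_lt_posu : (0 : CC I₁) < posu := by
  rw [zero_def, posu, ctr_lt_ctr]; exact Or.inr ⟨rfl, by norm_num⟩
lemma negu_lt_zero' : (negu : CC I₁) < 0 := by
  rw [zero_def, negu, ctr_lt_ctr]; exact Or.inr ⟨rfl, by norm_num⟩
lemma pos_strictMono : StrictMono (pos : I₁ → CC I₁) := by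
  intro a b h; rw [pos, pos, ctr_lt_ctr]
  exact Or.inl ((Sum.Lex.inr_lt_inr_iff).2 ((Sum.Lex.inr_lt_inr_iff).2 h))
lemma neg_strictMono : StrictMono (neg : I₁ → CC I₁) := by
  intro a b h; rw [neg, neg, ctr_lt_ctr]
  exact Or.inl ((Sum.Lex.inl_lt_inl_iff).2 h)
lemma pos_ne_zero (a : I₁) : pos a ≠ 0 := (zero_lt_pos' a).ne'
lemma neg_ne_zero (a : I₁) : neg a ≠ 0 := (neg_lt_zero' a).ne
lemma posu_ne_zero : (posu : CC I₁) ≠ 0 := zero_lt_posu.ne'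

instance : Infinite (CC I₁) := Infinite.of_injective (fun q : ℚ => ctr e₀ q)
  (by intro a b h; exact (ctr_inj h).2)

lemma qq_lt_iff {x y : QQ I₁} :
    x < y ↔ ∃ j, (∀ d < j, ofLex x d = ofLex y d) ∧ ofLex x j < ofLex y j := Iff.rfl

/-- A bound beyond which `x` vanishes. -/
def fresh (x : QQ I₁) : ℕ := (ofLex x).support.sup id + 1
lemma fresh_pos (x : QQ I₁) : 0 < fresh x := Nat.succ_pos _
lemma apply_eq_zero_of_fresh_le {x : QQ I₁} {n : ℕ} (h : fresh x ≤ n) : ofLex x n = 0 := by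
  by_contra hn
  have h1 : n ∈ (ofLex x).support := Finsupp.mem_support_iff.2 hn
  have h2 : n ≤ (ofLex x).support.sup id := Finset.le_sup (f := id) h1
  rw [fresh] at h; omega

/-- Update of a lexicographic finsupp at one coordinate. -/
noncomputable def upd (x : QQ I₁) (p : ℕ) (c : CC I₁) : QQ I₁ := toLex ((ofLex x).update p c)
lemma upd_apply_same (x : QQ I₁) (p : ℕ) (c : CC I₁) : ofLex (upd x p c) p = c := by
  simp [upd, Finsupp.coe_update]
lemma upd_apply_ne (x : QQ I₁) (p : ℕ) (c : CC I₁) {m : ℕ} (h : m ≠ p) :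
    ofLex (upd x p c) m = ofLex x m := by
  simp [upd, Finsupp.coe_update, Function.update_of_ne h]

lemma lt_upd_of_fresh {x : QQ I₁} {p : ℕ} (hp : fresh x ≤ p) {c : CC I₁} (hc : 0 < c) :
    x < upd x p c := by
  refine ⟨p, fun d hd => (upd_apply_ne x p c hd.ne).symm, ?_⟩
  rw [upd_apply_same, apply_eq_zero_of_fresh_le hp]; exact hc
lemma upd_lt_of_fresh {x : QQ I₁} {p : ℕ} (hp : fresh x ≤ p) {c : CC I₁} (hc : c < 0) :
    upd x p c < x := by
  refine ⟨p, fun d hd => upd_apply_ne x p c hd.ne, ?_⟩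
  rw [upd_apply_same, apply_eq_zero_of_fresh_le hp]; exact hc

lemma exists_wit_lt {x y : QQ I₁} (h : x < y) {p : ℕ} (hx : fresh x ≤ p) (hy : fresh y ≤ p) :
    ∃ j < p, (∀ d < j, ofLex x d = ofLex y d) ∧ ofLex x j < ofLex y j := by
  obtain ⟨j, h1, h2⟩ := qq_lt_iff.1 h
  refine ⟨j, ?_, h1, h2⟩
  by_contra hj
  rw [apply_eq_zero_of_fresh_le (le_trans hx (not_lt.1 hj)),
    apply_eq_zero_of_fresh_le (le_trans hy (not_lt.1 hj))] at h2
  exact lt_irrefl _ h2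

lemma upd_lt_of_lt {x y : QQ I₁} (h : x < y) {p : ℕ} (hx : fresh x ≤ p) (hy : fresh y ≤ p)
    (c : CC I₁) : upd x p c < y := by
  obtain ⟨j, hj, h1, h2⟩ := exists_wit_lt h hx hy
  refine ⟨j, fun d hd => ?_, ?_⟩
  · rw [upd_apply_ne x p c (by omega)]; exact h1 d hd
  · rw [upd_apply_ne x p c (by omega)]; exact h2
lemma lt_upd_of_lt {x y : QQ I₁} (h : y < x) {p : ℕ} (hx : fresh x ≤ p) (hy : fresh y ≤ p)
    (c : CC I₁) : y < upd x p c := by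
  obtain ⟨j, hj, h1, h2⟩ := exists_wit_lt h hy hx
  refine ⟨j, fun d hd => ?_, ?_⟩
  · rw [upd_apply_ne x p c (by omega)]; exact h1 d hd
  · rw [upd_apply_ne x p c (by omega)]; exact h2
lemma upd_lt_upd {x : QQ I₁} {p : ℕ} {c c' : CC I₁} (h : c < c') : upd x p c < upd x p c' := by
  refine ⟨p, fun d hd => ?_, ?_⟩
  · rw [upd_apply_ne x p c hd.ne, upd_apply_ne x p c' hd.ne]
  · rw [upd_apply_same, upd_apply_same]; exact h

/-- The canonical copy of `I₁` inside `QQ I₁`. -/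
noncomputable def fA (a : I₁) : QQ I₁ := toLex (Finsupp.single 0 (neg a))
lemma fA_apply_zero (a : I₁) : ofLex (fA a) 0 = neg a := by simp [fA]
lemma fA_apply_ne (a : I₁) {m : ℕ} (h : m ≠ 0) : ofLex (fA a) m = 0 := by
  show (Finsupp.single 0 (neg a)) m = 0
  exact Finsupp.single_eq_of_ne' (Ne.symm h)
lemma fresh_fA (a : I₁) : fresh (fA a) ≤ 1 := by
  have : (ofLex (fA a)).support ⊆ {0} := by
    simp only [fA]; exact Finsupp.support_single_subset
  have h2 : (ofLex (fA a)).support.sup id ≤ ({0} : Finset ℕ).sup id := Finset.sup_mono this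
  have h0 : ({0} : Finset ℕ).sup id = 0 := rfl
  simp only [fresh]
  omega
lemma fA_strictMono : StrictMono (fA : I₁ → QQ I₁) := by
  intro a b h
  refine ⟨0, fun d hd => absurd hd (Nat.not_lt_zero d), ?_⟩
  rw [fA_apply_zero, fA_apply_zero]; exact neg_strictMono h

lemma not_mem_image_fA {x : QQ I₁} {m : ℕ} (hm : m ≠ 0) (h : ofLex x m ≠ 0) (T : Set I₁) :
    x ∉ fA '' T := by
  rintro ⟨a, _, rfl⟩
  exact h (fA_apply_ne a hm)

/-- The complement of any subset of the copy of `I₁` is order-dense in `QQ I₁`. -/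
lemma compl_dense (T : Set I₁) (x y : QQ I₁) (h : x < y) :
    ∃ z, z ∉ fA '' T ∧ x < z ∧ z < y := by
  set p := max (fresh x) (fresh y) with hp
  refine ⟨upd x p posu, ?_, ?_, ?_⟩
  · apply not_mem_image_fA (m := p) _ _ T
    · have := fresh_pos x; omega
    · rw [upd_apply_same]; exact posu_ne_zero
  · exact lt_upd_of_fresh (le_max_left _ _) zero_lt_posu
  · exact upd_lt_of_lt h (le_max_left _ _) (le_max_right _ _) _

/-- Key lemma: each cut class of a point outside (a subset of) the copy of `I₁`
absorbs an order-embedded copy of that subset. -/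
lemma cut_embed (T : Set I₁) (t : QQ I₁) (ht : t ∉ fA '' T) :
    Nonempty (↥(fA '' T) ↪o
      ↥{s : QQ I₁ | s ∉ fA '' T ∧ ∀ r ∈ fA '' T, (s < r ↔ t < r)}) := by
  set p := fresh t with hp
  have hp1 : 1 ≤ p := fresh_pos t
  have key : ∀ c : I₁, upd t p (pos c) ∈
      {s : QQ I₁ | s ∉ fA '' T ∧ ∀ r ∈ fA '' T, (s < r ↔ t < r)} := by
    intro c
    constructor
    · apply not_mem_image_fA (m := p) (by omega) _ T
      rw [upd_apply_same]; exact pos_ne_zero c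
    · rintro r ⟨a, ha, rfl⟩
      have hfr : fresh (fA a) ≤ p := le_trans (fresh_fA a) hp1
      have hne : t ≠ fA a := fun he => ht (he ▸ ⟨a, ha, rfl⟩)
      rcases lt_trichotomy t (fA a) with hlt | heq | hgt
      · simp only [hlt, iff_true]
        exact upd_lt_of_lt hlt (le_refl p) hfr _
      · exact absurd heq hne
      · have h2 : fA a < upd t p (pos c) := lt_upd_of_lt hgt (le_refl p) hfr _
        simp only [not_lt_of_gt hgt, iff_false]
        exact not_lt_of_gt h2
  let e : ↥T ≃o ↥(fA '' T) := StrictMonoOn.orderIso fA T (fA_strictMono.strictMonoOn T)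
  let g : ↥T ↪o ↥{s : QQ I₁ | s ∉ fA '' T ∧ ∀ r ∈ fA '' T, (s < r ↔ t < r)} :=
    OrderEmbedding.ofStrictMono (fun a => ⟨upd t p (pos a.1), key a.1⟩)
      (fun a b hab => upd_lt_upd (pos_strictMono hab))
  exact ⟨(e.symm.toOrderEmbedding).trans g⟩

/-- `K^flin` transfers along order isomorphisms. -/
lemma kflin_congr {α β : Type u} [LinearOrder α] [LinearOrder β] (e : α ≃o β)
    (h : KflinOrder α) : KflinOrder β := by
  obtain ⟨h1, h2, h3, h4⟩ := h
  refine ⟨Infinite.of_injective ⇑e e.injective, ?_, ?_, ?_⟩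
  · refine ⟨fun b => ?_⟩
    obtain ⟨a, ha⟩ := exists_lt (e.symm b)
    exact ⟨e a, by simpa using e.strictMono ha⟩
  · refine ⟨fun b => ?_⟩
    obtain ⟨a, ha⟩ := exists_gt (e.symm b)
    exact ⟨e a, by simpa using e.strictMono ha⟩
  · intro a b hab hne
    have himg : e '' Set.Ioo (e.symm a) (e.symm b) = Set.Ioo a b := by
      rw [e.image_Ioo]; simp
    have hlt : e.symm a < e.symm b := e.symm.strictMono hab
    have hne' : (Set.Ioo (e.symm a) (e.symm b)).Nonempty := by
      obtain ⟨c, hc⟩ := hne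
      exact ⟨e.symm c, e.symm.strictMono hc.1, e.symm.strictMono hc.2⟩
    calc Cardinal.mk (Set.Ioo a b) = Cardinal.mk (e '' Set.Ioo (e.symm a) (e.symm b)) := by
            rw [himg]
      _ = Cardinal.mk (Set.Ioo (e.symm a) (e.symm b)) := Cardinal.mk_image_eq e.injective
      _ = Cardinal.mk α := h4 _ _ hlt hne'
      _ = Cardinal.mk β := Cardinal.mk_congr e.toEquiv

open Cardinal in
lemma mk_QQ : #(QQ I₁) = #I₁ + ℵ₀ := by
  have hEE : #(EE I₁) = #I₁ + (1 + #I₁) := by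
    have h1 : #(EE I₁) = #(I₁ ⊕ Lex (PUnit.{u+1} ⊕ I₁)) := Cardinal.mk_congr ofLex
    have h2 : #(Lex (PUnit.{u+1} ⊕ I₁)) = #(PUnit.{u+1} ⊕ I₁) := Cardinal.mk_congr ofLex
    rw [h1, Cardinal.mk_sum, h2, Cardinal.mk_sum]
    simp
  have hCC : #(CC I₁) = (#I₁ + (1 + #I₁)) * ℵ₀ := by
    have h1 : #(CC I₁) = #(EE I₁ × ℚ) := Cardinal.mk_congr ofLex
    rw [h1, Cardinal.mk_prod, hEE]
    simp
  have hQC : #(QQ I₁) = max ℵ₀ #(CC I₁) := by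
    have h1 : #(QQ I₁) = #(ℕ →₀ CC I₁) := Cardinal.mk_congr ofLex
    rw [h1, Cardinal.mk_finsupp_lift_of_infinite']
    simp
  have harith : (#I₁ + (1 + #I₁)) * ℵ₀ = #I₁ + ℵ₀ := by
    set κ := #I₁
    set μ := κ + ℵ₀ with hμdef
    have hμ : ℵ₀ ≤ μ := le_add_self
    have hκμ : κ ≤ μ := self_le_add_right _ _
    apply le_antisymm
    · calc (κ + (1 + κ)) * ℵ₀ ≤ (μ + (μ + μ)) * μ := by
            gcongr
            exact le_trans one_le_aleph0 hμ
        _ = μ * μ := by rw [Cardinal.add_eq_self hμ, Cardinal.add_eq_self hμ]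
        _ = μ := Cardinal.mul_eq_self hμ
    · have hbase : κ + (1 + κ) ≤ (κ + (1 + κ)) * ℵ₀ :=
        le_mul_of_one_le_right (by exact zero_le) one_le_aleph0
      have h2 : ℵ₀ ≤ (κ + (1 + κ)) * ℵ₀ := by
        calc ℵ₀ = 1 * ℵ₀ := (one_mul _).symm
          _ ≤ (κ + (1 + κ)) * ℵ₀ := by
              gcongr
              calc (1:Cardinal) ≤ 1 + κ := self_le_add_right _ _
                _ ≤ κ + (1 + κ) := le_add_self
      have h3 : κ ≤ (κ + (1 + κ)) * ℵ₀ := le_trans (self_le_add_right _ _) hbase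
      calc κ + ℵ₀ ≤ (κ + (1 + κ)) * ℵ₀ + (κ + (1 + κ)) * ℵ₀ := add_le_add h3 h2
        _ = (κ + (1 + κ)) * ℵ₀ := Cardinal.add_eq_self h2
  rw [hQC, hCC, harith]
  rw [max_eq_right]
  exact le_add_self

open Cardinal in
lemma kflin_QQ : KflinOrder (QQ I₁) := by
  refine ⟨?_, ?_, ?_, ?_⟩
  · exact Infinite.of_injective (fun c : CC I₁ => toLex (Finsupp.single 1 c))
      fun a b h => Finsupp.single_injective 1 h
  · exact ⟨fun x => ⟨upd x (fresh x) negu, upd_lt_of_fresh le_rfl negu_lt_zero'⟩⟩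
  · exact ⟨fun x => ⟨upd x (fresh x) posu, lt_upd_of_fresh le_rfl zero_lt_posu⟩⟩
  · rintro x y hxy ⟨h, hh⟩
    apply le_antisymm (Cardinal.mk_set_le _)
    have hQC : #(QQ I₁) = max ℵ₀ #(CC I₁) := by
      have h1 : #(QQ I₁) = #(ℕ →₀ CC I₁) := Cardinal.mk_congr ofLex
      rw [h1, Cardinal.mk_finsupp_lift_of_infinite']
      simp
    rw [hQC, max_eq_right (Cardinal.aleph0_le_mk (CC I₁))]
    set p := max (max (fresh x) (fresh y)) (fresh h) with hpdef
    have hx : fresh x ≤ p := le_trans (le_max_left _ _) (le_max_left _ _)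
    have hy : fresh y ≤ p := le_trans (le_max_right _ _) (le_max_left _ _)
    have hfh : fresh h ≤ p := le_max_right _ _
    refine Cardinal.mk_le_of_injective (f := fun c : CC I₁ =>
      (⟨upd h p c, lt_upd_of_lt hh.1 hfh hx c, upd_lt_of_lt hh.2 hfh hy c⟩ : Set.Ioo x y)) ?_
    intro a b hab
    have := congrArg (fun z : Set.Ioo x y => ofLex z.1 p) hab
    simpa [upd_apply_same] using this

end

theorem stmt1 (I₁ : Type u) [LinearOrder I₁] :
    ∃ (I₂ : LinOrd.{u}) (A : Set I₂) (f : I₁ ≃o ↥A),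
      KflinOrder I₂ ∧
      Cardinal.mk I₂ = Cardinal.mk I₁ + Cardinal.aleph0 ∧
      LeStarFlin A ∧
      ∀ S : Set I₁, KflinOrder ↥S →
        KflinOrder ↥((fun x : I₁ => ((f x : ↥A) : I₂)) '' S) ∧
        LeStarFlin ((fun x : I₁ => ((f x : ↥A) : I₂)) '' S) := by
  refine ⟨LinOrd.of (QQ I₁), Set.range fA, StrictMono.orderIso fA fA_strictMono, ?_, ?_, ?_, ?_⟩
  · exact kflin_QQ
  · exact mk_QQ
  · rw [← Set.image_univ]
    exact Or.inr ⟨compl_dense Set.univ, fun t ht => cut_embed Set.univ t ht⟩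
  · intro S hS
    have hfun : (fun x : I₁ => ((StrictMono.orderIso fA fA_strictMono x : ↥(Set.range fA)) :
        QQ I₁)) = fA := rfl
    rw [hfun]
    constructor
    · exact kflin_congr (StrictMonoOn.orderIso fA S (fA_strictMono.strictMonoOn S)) hS
    · exact Or.inr ⟨compl_dense S, fun t ht => cut_embed S t ht⟩

end Shelah734
end

section
/- Fix an ordinal α* ≥ 1 and subsets u⁻, u⁺ ⊆ α*, let J, I be colored linear orders and e ∈ 𝐞(J,I). Then: (0a) if t is the first element of J and t ∈ P^J_α with α ∈ u⁻, then t ∉ Dom(e); (0b) if t ∈ Dom(e) is the first element of its e-class and t ∈ P^J_α, then α ∉ u⁻; (1) if t is the immediate successor of s in J and t ∈ P^J_α with α ∈ u⁻, then s ∈ Dom(e) iff t ∈ Dom(e), and if s ∈ Dom(e) then s and t are e-equivalent; (2) if ⟨t_i : i < δ⟩ is a <_J-increasing sequence with limit t_δ in J and t_δ ∈ P^J_α with α ∈ u⁻, then: (a) if no t_i belongs to Dom(e), then t_δ ∉ Dom(e); (b) if for every i < δ there is j with i < j < δ such that t_i and t_j are not e-equivalent, then t_δ ∉ Dom(e); (c)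 if every t_i is e-equivalent to t₀, then t_δ is e-equivalent to t₀. -/
universe u

namespace Shelah734

/-- Membership in `inc_J(I)` for colored linear orders given by the colorings
`cJ`, `cI`, relative to the parameter sets `um = u⁻` and `up = u⁺`. -/
def Inc {J : Type*} {I : Type*} [LinearOrder J] [LinearOrder I]
    (um up : Set Ordinal) (cJ : J → Ordinal) (cI : I → Ordinal)
    (h : J → I) : Prop :=
  StrictMono h ∧ (∀ t, cI (h t) = cJ t) ∧
    (∀ t, cJ t ∈ um → ∀ s, s < h t → ∃ t₁, t₁ < t ∧ s ≤ h t₁) ∧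
    (∀ t, cJ t ∈ up → ∀ s, h t < s → ∃ t₁, t < t₁ ∧ h t₁ ≤ s)

/-- `e ∈ 𝐞(J)` : a partial equivalence relation all of whose classes are convex. -/
def ConvexPER {J : Type*} [LinearOrder J] (e : J → J → Prop) : Prop :=
  (∀ s t, e s t → e t s) ∧ (∀ s t r, e s t → e t r → e s r) ∧
    (∀ s t r, e s t → s ≤ r → r ≤ t → e s r)

/-- The domain of a partial equivalence relation. -/
def eDom {J : Type*} (e : J → J → Prop) : Set J := {s | e s s}

/-- `Y` represents a subset of `Dom(e)/e` : an `e`-invariant subset of the domain. -/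
def ClassSet {J : Type*} (e : J → J → Prop) (Y : Set J) : Prop :=
  Y ⊆ eDom e ∧ ∀ s t, e s t → (s ∈ Y ↔ t ∈ Y)

/-- `(h₁, h₂)` is a strict `(e, Y)`-pair (with `Y` an invariant subset of the
domain representing a set `𝒴` of `e`-classes). -/
def StrictPair {J : Type*} {I : Type*} [LinearOrder J] [LinearOrder I]
    (e : J → J → Prop) (Y : Set J) (h₁ h₂ : J → I) : Prop :=
  (∀ s, ¬ e s s ↔ h₁ s = h₂ s) ∧
    (∀ s t, s < t → e s s → e t t → ¬ e s t → h₁ s < h₂ t ∧ h₂ s < h₁ t) ∧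
    (∀ s t, s < t → e s t → ((h₁ t < h₂ s ↔ s ∈ Y) ∧ (s ∈ Y ↔ h₁ s < h₂ t)))

/-- `(h₁, h₂)` is an `e`-pair. -/
def EPair {J : Type*} {I : Type*} [LinearOrder J] [LinearOrder I]
    (e : J → J → Prop) (h₁ h₂ : J → I) : Prop :=
  ∃ Y : Set J, ClassSet e Y ∧ StrictPair e Y h₁ h₂

/-- `e ∈ 𝐞(J, I)`. -/
def EJI {J : Type*} {I : Type*} [LinearOrder J] [LinearOrder I]
    (um up : Set Ordinal) (cJ : J → Ordinal) (cI : I → Ordinal)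
    (e : J → J → Prop) : Prop :=
  ConvexPER e ∧
    ∃ h₁ h₂ : J → I, Inc um up cJ cI h₁ ∧ Inc um up cJ cI h₂ ∧ EPair e h₁ h₂

/-- The quantifier-free type of a tuple of members of `inc_J(I)` :
`qftp(h₁, …, hₙ; I) = {(ℓ, m, s, t) : h_ℓ(s) <_I h_m(t)}`. -/
def qftp {J : Type*} {I : Type*} [LinearOrder I] {n : ℕ} (hs : Fin n → J → I) :
    Set (Fin n × Fin n × J × J) :=
  {q : Fin n × Fin n × J × J | hs q.1 q.2.2.1 < hs q.2.1 q.2.2.2}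

/-- Restriction of a relation to a set. -/
def restrictE {J : Type*} (e : J → J → Prop) (S : Set J) : J → J → Prop :=
  fun s t => e s t ∧ s ∈ S ∧ t ∈ S

/-- `(I, J)` is a reasonable `(μ, α*)`-base. -/
def Reasonable {J : Type*} {I : Type*} [LinearOrder J] [LinearOrder I]
    (um up : Set Ordinal) (cJ : J → Ordinal) (cI : I → Ordinal)
    (μ : Cardinal) : Prop :=
  Cardinal.mk J ≤ μ ∧ (∃ e : J → J → Prop, EJI um up cJ cI e) ∧
    ∀ e : J → J → Prop, EJI um up cJ cI e →
      ∀ h₁ h₂ : J → I, Inc um up cJ cI h₁ → Inc um up cJ cI h₂ →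
        EPair e h₁ h₂ →
          ∃ h₁' h₂' h₃' : J → I, ∃ Y : Set J,
            Inc um up cJ cI h₁' ∧ Inc um up cJ cI h₂' ∧ Inc um up cJ cI h₃' ∧
            ClassSet e Y ∧ qftp ![h₁', h₂'] = qftp ![h₁, h₂] ∧
            StrictPair e Y h₁' h₃' ∧ StrictPair e Y h₂' h₃'

/-- `(I, J)` is a wide `(λ, μ, α*)`-base. -/
def Wide {J : Type*} {I : Type*} [LinearOrder J] [LinearOrder I]
    (um up : Set Ordinal) (cJ : J → Ordinal) (cI : I → Ordinal)
    (lam μ : Cardinal) : Prop :=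
  Cardinal.mk J ≤ μ ∧ (∃ e : J → J → Prop, EJI um up cJ cI e) ∧
    ∀ e : J → J → Prop, EJI um up cJ cI e →
      ∃ hs : lam.ord.ToType → J → I,
        (∀ ξ, Inc um up cJ cI (hs ξ)) ∧
          ∀ ξ ζ, ξ < ζ → EPair e (hs ξ) (hs ζ)

/-- `E` is an invariant equivalence relation on `inc_J(I)`. -/
def InvariantER {J : Type*} {I : Type*} [LinearOrder J] [LinearOrder I]
    (um up : Set Ordinal) (cJ : J → Ordinal) (cI : I → Ordinal)
    (E : (J → I) → (J → I) → Prop) : Prop :=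
  (∀ h, Inc um up cJ cI h → E h h) ∧
    (∀ h₁ h₂, Inc um up cJ cI h₁ → Inc um up cJ cI h₂ → E h₁ h₂ → E h₂ h₁) ∧
    (∀ h₁ h₂ h₃, Inc um up cJ cI h₁ → Inc um up cJ cI h₂ → Inc um up cJ cI h₃ →
      E h₁ h₂ → E h₂ h₃ → E h₁ h₃) ∧
    (∀ h₁ h₂ h₃ h₄, Inc um up cJ cI h₁ → Inc um up cJ cI h₂ →
      Inc um up cJ cI h₃ → Inc um up cJ cI h₄ →
      qftp ![h₁, h₂] = qftp ![h₃, h₄] → (E h₁ h₂ ↔ E h₃ h₄))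

/-- `E` is a non-trivial invariant equivalence relation. -/
def NonTrivialER {J : Type*} {I : Type*} [LinearOrder J] [LinearOrder I]
    (um up : Set Ordinal) (cJ : J → Ordinal) (cI : I → Ordinal)
    (E : (J → I) → (J → I) → Prop) : Prop :=
  (∀ h₁ h₂, Inc um up cJ cI h₁ → Inc um up cJ cI h₂ →
      ({t : J | h₁ t = h₂ t}ᶜ).Finite → E h₁ h₂) ∧
    ∃ h₁ h₂, Inc um up cJ cI h₁ ∧ Inc um up cJ cI h₂ ∧ ¬ E h₁ h₂

/-- `u ∈ 𝒟_ℰ`. -/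
def DEMem {J : Type*} {I : Type*} [LinearOrder J] [LinearOrder I]
    (um up : Set Ordinal) (cJ : J → Ordinal) (cI : I → Ordinal)
    (E : (J → I) → (J → I) → Prop) (u : Set J) : Prop :=
  ∀ h₁ h₂, Inc um up cJ cI h₁ → Inc um up cJ cI h₂ →
    (∀ t ∈ u, h₁ t = h₂ t) → E h₁ h₂

/-- The subset of `Dom(e)/e` represented by the invariant set `Y` belongs to
`𝒟_{ℰ,e}`. -/
def DEeMem {J : Type*} {I : Type*} [LinearOrder J] [LinearOrder I]
    (um up : Set Ordinal) (cJ : J → Ordinal) (cI : I → Ordinal)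
    (E : (J → I) → (J → I) → Prop) (e : J → J → Prop) (Y : Set J) : Prop :=
  ClassSet e Y ∧
    ∀ h₁ h₂, Inc um up cJ cI h₁ → Inc um up cJ cI h₂ →
      EPair (restrictE e (eDom e \ Y)) h₁ h₂ → E h₁ h₂

/-- `I₁ ≤¹_J I₂`, where `I₁` is the suborder of `I₂` on the subset `A`
(with the induced order and coloring). -/
def Le1 {J : Type*} {I : Type*} [LinearOrder J] [LinearOrder I]
    (um up : Set Ordinal) (cJ : J → Ordinal) (cI : I → Ordinal)
    (A : Set I) : Prop :=
  ∀ h₁ h₂ h₃ : J → I,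
    Inc um up cJ cI h₁ → Inc um up cJ cI h₂ → Inc um up cJ cI h₃ →
      ∃ h₁' h₂' h₃' : J → ↥A,
        Inc um up cJ (fun a : ↥A => cI ↑a) h₁' ∧
        Inc um up cJ (fun a : ↥A => cI ↑a) h₂' ∧
        Inc um up cJ (fun a : ↥A => cI ↑a) h₃' ∧
        qftp ![h₁', h₂', h₃'] = qftp ![h₁, h₂, h₃]

theorem stmt6 (αs : Ordinal) (hαs : 1 ≤ αs)
    (um up : Set Ordinal) (hum : um ⊆ Set.Iio αs) (hup : up ⊆ Set.Iio αs)
    (J I : Type*) [LinearOrder J] [LinearOrder I]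
    (cJ : J → Ordinal) (cI : I → Ordinal)
    (hcJ : ∀ x, cJ x < αs) (hcI : ∀ x, cI x < αs)
    (e : J → J → Prop) (he : EJI um up cJ cI e) :
    -- (0a)
    (∀ t : J, (∀ s, ¬ s < t) → cJ t ∈ um → ¬ e t t) ∧
    -- (0b)
    (∀ t : J, e t t → (∀ s, e s t → t ≤ s) → cJ t ∉ um) ∧
    -- (1)
    (∀ s t : J, s < t → (∀ r, ¬ (s < r ∧ r < t)) → cJ t ∈ um →
      ((e s s ↔ e t t) ∧ (e s s → e s t))) ∧
    -- (2)
    (∀ (δ : Ordinal) (t : δ.ToType → J) (tδ : J),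
      StrictMono t → (∀ i, t i < tδ) → (¬ ∃ s, (∀ i, t i < s) ∧ s < tδ) →
      cJ tδ ∈ um →
        ((∀ i, ¬ e (t i) (t i)) → ¬ e tδ tδ) ∧
        ((∀ i, ∃ j, i < j ∧ ¬ e (t i) (t j)) → ¬ e tδ tδ) ∧
        (∀ i₀, (∀ i, e (t i) (t i₀)) → e tδ (t i₀))) := by
  obtain ⟨⟨esymm, etrans, econv⟩, h₁, h₂, inc₁, inc₂, Y, ⟨Ysub, Yinv⟩, sp₁, sp₂, sp₃⟩ := he
  have mono₁ := inc₁.1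
  have mono₂ := inc₂.1
  have hnd : ∀ s, ¬ e s s → h₁ s = h₂ s := fun s h => (sp₁ s).mp h
  have hne : ∀ s, e s s → h₁ s ≠ h₂ s := fun s hss heq => ((sp₁ s).mpr heq) hss
  have key : ∀ t, cJ t ∈ um → e t t →
      ∃ t₁, t₁ < t ∧ (h₁ t ≤ h₂ t₁ ∨ h₂ t ≤ h₁ t₁) := by
    intro t hc htt
    rcases lt_or_gt_of_ne (hne t htt) with hlt | hgt
    · obtain ⟨t₁, ha, hb⟩ := inc₂.2.2.1 t hc (h₁ t) hlt
      exact ⟨t₁, ha, Or.inl hb⟩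
    · obtain ⟨t₁, ha, hb⟩ := inc₁.2.2.1 t hc (h₂ t) hgt
      exact ⟨t₁, ha, Or.inr hb⟩
  have part1 : ∀ s t : J, s < t → (∀ r, ¬ (s < r ∧ r < t)) → cJ t ∈ um →
      ((e s s ↔ e t t) ∧ (e s s → e s t)) := by
    intro s t hst hbet hc
    have hts : e t t → e s s ∧ e s t := by
      intro htt
      obtain ⟨t₁, hlt, hcase⟩ := key t hc htt
      have ht₁s : t₁ ≤ s := by
        by_contra hcon
        push_neg at hcon
        exact hbet t₁ ⟨hcon, hlt⟩
      rcases hcase with h | h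
      · have hk : h₁ t ≤ h₂ s := h.trans (mono₂.monotone ht₁s)
        have hss : e s s := by
          by_contra hns
          have heq := hnd s hns
          have h2 := mono₁ hst
          rw [heq] at h2
          exact h2.not_ge hk
        have hst' : e s t := by
          by_contra hnst
          exact absurd (sp₂ s t hst hss htt hnst).2 (not_lt.mpr hk)
        exact ⟨hss, hst'⟩
      · have hk : h₂ t ≤ h₁ s := h.trans (mono₁.monotone ht₁s)
        have hss : e s s := by
          by_contra hns
          have heq := hnd s hns
          have h2 := mono₂ hst
          rw [← heq] at h2
          exact h2.not_ge hk
        have hst' : e s t := by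
          by_contra hnst
          exact absurd (sp₂ s t hst hss htt hnst).1 (not_lt.mpr hk)
        exact ⟨hss, hst'⟩
    have hst2 : e s s → e t t := by
      intro hss
      by_contra hntt
      have heqt := hnd t hntt
      have ht₁s : ∀ t₁, t₁ < t → t₁ ≤ s := by
        intro t₁ hlt
        by_contra hcon
        push_neg at hcon
        exact hbet t₁ ⟨hcon, hlt⟩
      rcases lt_or_gt_of_ne (hne s hss) with hlt | hgt
      · have hv : h₂ s < h₁ t := lt_of_lt_of_eq (mono₂ hst) heqt.symm
        obtain ⟨t₁, ha, hb⟩ := inc₁.2.2.1 t hc (h₂ s) hv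
        exact absurd (hb.trans (mono₁.monotone (ht₁s t₁ ha))) (not_le.mpr hlt)
      · have hv : h₁ s < h₂ t := lt_of_lt_of_eq (mono₁ hst) heqt
        obtain ⟨t₁, ha, hb⟩ := inc₂.2.2.1 t hc (h₁ s) hv
        exact absurd (hb.trans (mono₂.monotone (ht₁s t₁ ha))) (not_le.mpr hgt)
    exact ⟨⟨hst2, fun htt => (hts htt).1⟩, fun hss => (hts (hst2 hss)).2⟩
  refine ⟨?_, ?_, part1, ?_⟩
  · -- (0a)
    intro t hmin hc htt
    obtain ⟨t₁, hlt, _⟩ := key t hc htt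
    exact hmin t₁ hlt
  · -- (0b)
    intro t htt hfirst hc
    obtain ⟨t₁, hlt, hcase⟩ := key t hc htt
    by_cases h11 : e t₁ t₁
    · by_cases h1t : e t₁ t
      · exact absurd (hfirst t₁ h1t) (not_le.mpr hlt)
      · have hp := sp₂ t₁ t hlt h11 htt h1t
        rcases hcase with h | h
        · exact absurd hp.2 (not_lt.mpr h)
        · exact absurd hp.1 (not_lt.mpr h)
    · have heq := hnd t₁ h11
      rcases hcase with h | h
      · rw [← heq] at h
        exact (mono₁ hlt).not_ge h
      · rw [heq] at h
        exact (mono₂ hlt).not_ge h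
  · -- (2)
    intro δ t tδ hmono hub hlim hc
    have hEx : ∀ s, s < tδ → ∃ i, s ≤ t i := by
      intro s hs
      by_contra hcon
      push_neg at hcon
      exact hlim ⟨s, hcon, hs⟩
    have transfer : ∀ h : J → I, Inc um up cJ cI h → ∀ v, v < h tδ →
        ∃ i, v ≤ h (t i) := by
      intro h hinc v hv
      obtain ⟨t₁, ha, hb⟩ := hinc.2.2.1 tδ hc v hv
      obtain ⟨i, hi⟩ := hEx t₁ ha
      exact ⟨i, hb.trans (hinc.1.monotone hi)⟩
    have key2 : e tδ tδ → ∃ i, (h₁ tδ ≤ h₂ (t i) ∨ h₂ tδ ≤ h₁ (t i)) := by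
      intro hdd
      rcases lt_or_gt_of_ne (hne tδ hdd) with hlt | hgt
      · obtain ⟨i, hi⟩ := transfer h₂ inc₂ (h₁ tδ) hlt
        exact ⟨i, Or.inl hi⟩
      · obtain ⟨i, hi⟩ := transfer h₁ inc₁ (h₂ tδ) hgt
        exact ⟨i, Or.inr hi⟩
    have part2a : (∀ i, ¬ e (t i) (t i)) → ¬ e tδ tδ := by
      intro hno hdd
      obtain ⟨i, hcase⟩ := key2 hdd
      have heq := hnd (t i) (hno i)
      rcases hcase with h | h
      · rw [← heq] at h
        exact (mono₁ (hub i)).not_ge h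
      · rw [heq] at h
        exact (mono₂ (hub i)).not_ge h
    refine ⟨part2a, ?_, ?_⟩
    · -- (2b)
      intro hcof hdd
      obtain ⟨i, hcase⟩ := key2 hdd
      have hii : e (t i) (t i) := by
        by_contra hno
        have heq := hnd (t i) hno
        rcases hcase with h | h
        · rw [← heq] at h
          exact (mono₁ (hub i)).not_ge h
        · rw [heq] at h
          exact (mono₂ (hub i)).not_ge h
      have hitδ : e (t i) tδ := by
        by_contra hn
        have hp := sp₂ (t i) tδ (hub i) hii hdd hn
        rcases hcase with h | h
        · exact absurd hp.2 (not_lt.mpr h)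
        · exact absurd hp.1 (not_lt.mpr h)
      obtain ⟨j, hij, hnij⟩ := hcof i
      exact hnij (econv (t i) tδ (t j) hitδ (hmono hij).le (hub j).le)
    · -- (2c)
      intro i₀ hall
      have hcls : ∀ i j, e (t i) (t j) :=
        fun i j => etrans _ _ _ (hall i) (esymm _ _ (hall j))
      have hdom : ∀ i, e (t i) (t i) := fun i => hcls i i
      by_contra hne0
      have hnk : ∀ k, ¬ e (t k) tδ :=
        fun k h => hne0 (etrans _ _ _ (esymm _ _ h) (hall k))
      by_cases hmax : ∃ m : δ.ToType, ∀ k, k ≤ m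
      · obtain ⟨m, hm⟩ := hmax
        have himm : ∀ r, ¬ (t m < r ∧ r < tδ) := by
          rintro r ⟨ha, hb⟩
          exact hlim ⟨r, fun i => lt_of_le_of_lt (hmono.monotone (hm i)) ha, hb⟩
        exact hnk m ((part1 (t m) tδ (hub m) himm hc).2 (hdom m))
      · push_neg at hmax
        by_cases hdd : e tδ tδ
        · rcases lt_or_gt_of_ne (hne tδ hdd) with hlt | hgt
          · obtain ⟨n, hn⟩ := transfer h₂ inc₂ (h₁ tδ) hlt
            exact absurd hn (not_le.mpr (sp₂ (t n) tδ (hub n) (hdom n) hdd (hnk n)).2)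
          · obtain ⟨n, hn⟩ := transfer h₁ inc₁ (h₂ tδ) hgt
            exact absurd hn (not_le.mpr (sp₂ (t n) tδ (hub n) (hdom n) hdd (hnk n)).1)
        · have hw := hnd tδ hdd
          have hYinv : ∀ i j, (t i ∈ Y ↔ t j ∈ Y) := fun i j => Yinv _ _ (hcls i j)
          obtain ⟨m', hm'⟩ := hmax i₀
          by_cases hy : t i₀ ∈ Y
          · have f1 : ∀ p q, p < q → h₁ (t q) < h₂ (t p) := fun p q hpq =>
              (sp₃ (t p) (t q) (hmono hpq) (hcls p q)).1.mpr ((hYinv p i₀).mpr hy)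
            have f2 : h₁ (t i₀) < h₂ (t i₀) := (mono₁ (hmono hm')).trans (f1 i₀ m' hm')
            obtain ⟨n, hn⟩ := transfer h₁ inc₁ (h₂ (t i₀))
              (lt_of_lt_of_eq (mono₂ (hub i₀)) hw.symm)
            rcases lt_trichotomy n i₀ with h | h | h
            · exact absurd (hn.trans (mono₁.monotone (hmono.monotone h.le)))
                (not_le.mpr f2)
            · rw [h] at hn
              exact absurd hn (not_le.mpr f2)
            · exact absurd hn (not_le.mpr (f1 i₀ n h))
          · have g1 : ∀ p q, p < q → h₂ (t q) ≤ h₁ (t p) := fun p q hpq =>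
              not_lt.mp fun hl =>
                hy ((hYinv p i₀).mp ((sp₃ (t p) (t q) (hmono hpq) (hcls p q)).2.mpr hl))
            have g2 : h₂ (t i₀) < h₁ (t i₀) :=
              (mono₂ (hmono hm')).trans_le (g1 i₀ m' hm')
            obtain ⟨n, hn⟩ := transfer h₂ inc₂ (h₁ (t i₀))
              (lt_of_lt_of_eq (mono₁ (hub i₀)) hw)
            have hin : i₀ < n := hmono.lt_iff_lt.mp (mono₂.lt_iff_lt.mp (g2.trans_le hn))
            obtain ⟨n', hn'⟩ := hmax n
            exact lt_irrefl _
              ((hn.trans_lt (mono₂ (hmono hn'))).trans_le (g1 i₀ n' (hin.trans hn')))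

end Shelah734
end

section
/- Let α* = 1 and u⁻ = u⁺ = ∅, so that colored linear orders are just linear orders and inc_J(I) is the set of strictly order-preserving maps from J to I. Let μ be an infinite cardinal, ζ* an ordinal with μ ≤ ζ* < μ⁺, and λ a cardinal with μ⁺ ≤ λ. Let J be the ordinal ζ* and I the ordinal product λ·ζ* (the order type of ζ* copies of λ), both regarded as linear orders. Then the pair (I,J) is a reasonable (μ,1)-base and a wide (λ,μ,1)-base. -/
universe u

namespace Shelah734

section Proof8
open Ordinal Cardinal

/-- Map an ordinal below `o` into `o.ToType`. -/
noncomputable def toI (o x : Ordinal.{u}) (hx : x < o) : o.ToType :=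
  Ordinal.ToType.mk ⟨x, hx⟩

theorem toI_lt_toI {o x y : Ordinal.{u}} (hx : x < o) (hy : y < o) :
    toI o x hx < toI o y hy ↔ x < y := by
  rw [toI, toI, OrderIso.lt_iff_lt]; exact Subtype.mk_lt_mk

theorem toI_eq_toI {o x y : Ordinal.{u}} (hx : x < o) (hy : y < o) :
    toI o x hx = toI o y hy ↔ x = y := by
  rw [toI, toI, EmbeddingLike.apply_eq_iff_eq]; exact Subtype.mk_eq_mk

theorem gap_lt {Γ b b' c : Ordinal.{u}} (hc : c < Γ) (hb : b < b') :
    Γ * b + c < Γ * b' := by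
  calc Γ * b + c < Γ * b + Γ := add_lt_add_right hc _
    _ = Γ * (b + 1) := by rw [mul_add, mul_one]
    _ ≤ Γ * b' := mul_le_mul_right (by rwa [Ordinal.add_one_eq_succ, Order.succ_le_iff]) _

theorem lt_add_pos {a b : Ordinal.{u}} (hb : 0 < b) : a < a + b := by
  simpa using (add_lt_add_iff_left a).mpr hb

theorem gap_ne {Γ a b c : Ordinal.{u}} (hΓ : 0 < Γ) (h0 : 0 < c) (hc : c < Γ) :
    Γ * b + c ≠ Γ * a := by
  rcases lt_trichotomy b a with h | rfl | h
  · exact ne_of_lt (gap_lt hc h)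
  · exact ne_of_gt (lt_add_pos h0)
  · exact ne_of_gt (lt_of_lt_of_le ((mul_lt_mul_iff_right₀ hΓ).mpr h)
      (le_self_add))


section rko
variable {α : Type u} [LinearOrder α] [WellFoundedLT α]

/-- The rank of an element in a well-order, as an ordinal. -/
noncomputable def rko (x : α) : Ordinal.{u} :=
  @Ordinal.typein α (· < ·) isWellOrder_lt x

theorem rko_lt_rko {x y : α} : rko x < rko y ↔ x < y :=
  @Ordinal.typein_lt_typein α (· < ·) isWellOrder_lt x y

theorem rko_mono {x y : α} (h : x < y) : rko x < rko y := rko_lt_rko.mpr h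

theorem rko_lt_self {o : Ordinal.{u}} (t : o.ToType) : rko t < o :=
  Ordinal.typein_lt_self t

end rko

section mcl
variable {Jt : Type u} [LinearOrder Jt] [WellFoundedLT Jt] {e : Jt → Jt → Prop}

open Classical in
/-- The minimum of the `e`-class of `t` (junk value if `t ∉ Dom e`). -/
noncomputable def mcl (e : Jt → Jt → Prop) (t : Jt) : Jt :=
  if h : e t t then
    (IsWellFounded.wf (r := ((· < ·) : Jt → Jt → Prop))).min {s | e s t} ⟨t, h⟩
  else t

theorem mcl_mem {t : Jt} (h : e t t) : e (mcl e t) t := by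
  classical
  rw [mcl, dif_pos h]
  show _ ∈ {s | e s t}
  exact WellFounded.min_mem _ _ _

theorem mcl_le (hsym : ∀ s t, e s t → e t s) (htr : ∀ s t r, e s t → e t r → e s r)
    {s t : Jt} (h : e s t) : mcl e t ≤ s := by
  have htt : e t t := htr _ _ _ (hsym _ _ h) h
  classical
  rw [mcl, dif_pos htt]
  exact le_of_not_gt (WellFounded.not_lt_min _ {s | e s t} (x := s) h)

theorem mcl_congr (hsym : ∀ s t, e s t → e t s) (htr : ∀ s t r, e s t → e t r → e s r)
    {s t : Jt} (h : e s t) : mcl e s = mcl e t := by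
  have hss : e s s := htr _ _ _ h (hsym _ _ h)
  have htt : e t t := htr _ _ _ (hsym _ _ h) h
  refine le_antisymm (mcl_le hsym htr ?_) (mcl_le hsym htr ?_)
  · exact htr _ _ _ (mcl_mem htt) (hsym _ _ h)
  · exact htr _ _ _ (mcl_mem hss) h

theorem lt_mcl (hsym : ∀ s t, e s t → e t s) (htr : ∀ s t r, e s t → e t r → e s r)
    (hconv : ∀ s t r, e s t → s ≤ r → r ≤ t → e s r)
    {s t : Jt} (htt : e t t) (hst : s < t) (hns : ¬ e s t) : s < mcl e t := by
  by_contra hle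
  push_neg at hle
  have h2 : e (mcl e t) s := hconv _ _ _ (mcl_mem htt) hle hst.le
  exact hns (htr _ _ _ (hsym _ _ h2) (mcl_mem htt))

end mcl

section rnk
variable {α : Type u} [LinearOrder α] [WellFoundedLT α]

open Classical in
/-- The rank of `x` inside the subset `X` of the well-order `α`. -/
noncomputable def rnk (X : Set α) (x : α) : Ordinal.{u} :=
  if hx : x ∈ X then Ordinal.typein (α := ↥X) (· < ·) (⟨x, hx⟩ : ↥X) else 0

theorem rnk_lt_rnk {X : Set α} {x y : α} (hx : x ∈ X) (hy : y ∈ X) :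
    rnk X x < rnk X y ↔ x < y := by
  classical
  rw [rnk, rnk, dif_pos hx, dif_pos hy, Ordinal.typein_lt_typein]
  exact Subtype.mk_lt_mk

theorem rnk_le_rnk {X : Set α} {x y : α} (hx : x ∈ X) (hy : y ∈ X) (h : x ≤ y) :
    rnk X x ≤ rnk X y := by
  rcases h.lt_or_eq with h' | rfl
  · exact le_of_lt ((rnk_lt_rnk hx hy).mpr h')
  · exact le_rfl

theorem rnk_lt_ord {X : Set α} {c : Cardinal.{u}} (hc : Cardinal.aleph0 ≤ c)
    (hX : #(↥X) < c) (x : α) : rnk X x < c.ord := by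
  classical
  rw [rnk]
  split
  · refine lt_trans (Ordinal.typein_lt_type _ _) ?_
    rw [Cardinal.lt_ord, Ordinal.card_type]
    exact hX
  · rw [Cardinal.lt_ord, Ordinal.card_zero]
    exact lt_of_lt_of_le Cardinal.aleph0_pos hc

end rnk
end Proof8
section Proof8B
open Ordinal Cardinal

universe v
variable {μ lam : Cardinal.{u}} {ζs : Ordinal.{u}}

theorem inc_triv {Jt It : Type u} [LinearOrder Jt] [LinearOrder It]
    {h : Jt → It} (hm : StrictMono h) :
    Inc (∅ : Set Ordinal.{v}) (∅ : Set Ordinal.{v}) (fun _ => (0 : Ordinal.{v})) (fun _ => (0 : Ordinal.{v})) h :=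
  ⟨hm, fun _ => rfl, fun _ ht => absurd ht (Set.notMem_empty _),
    fun _ ht => absurd ht (Set.notMem_empty _)⟩

theorem exists_e_aux (hμ : Cardinal.aleph0 ≤ μ) (hlam : Order.succ μ ≤ lam) :
    ∃ e : ζs.ToType → ζs.ToType → Prop,
      EJI (J := ζs.ToType) (I := (lam.ord * ζs).ToType)
        (∅ : Set Ordinal.{v}) (∅ : Set Ordinal.{v}) (fun _ => (0:Ordinal.{v})) (fun _ => (0:Ordinal.{v})) e := by
  have hlpos : (0:Ordinal) < lam.ord := by
    rw [Cardinal.lt_ord, Ordinal.card_zero]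
    exact lt_of_lt_of_le Cardinal.aleph0_pos (hμ.trans ((Order.le_succ μ).trans hlam))
  have hb : ∀ t : ζs.ToType,
      lam.ord * rko t < lam.ord * ζs :=
    fun t => (mul_lt_mul_iff_right₀ hlpos).mpr (rko_lt_self t)
  have hmono : StrictMono (fun t => toI _ _ (hb t)) := fun s t hst => (toI_lt_toI _ _).mpr
    ((mul_lt_mul_iff_right₀ hlpos).mpr (rko_mono hst))
  refine ⟨fun _ _ => False,
    ⟨fun _ _ hf => hf.elim, fun _ _ _ hf _ => hf.elim, fun _ _ _ hf _ _ => hf.elim⟩,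
    _, _, inc_triv hmono, inc_triv hmono,
    ∅, ⟨Set.empty_subset _, fun _ _ hf => hf.elim⟩,
    ⟨fun s => ⟨fun _ => rfl, fun _ => not_false⟩,
      fun _ _ _ hss _ _ => hss.elim, fun _ _ _ hest => hest.elim⟩⟩

theorem wide_main (hμ : Cardinal.aleph0 ≤ μ) (hζ2 : ζs < (Order.succ μ).ord)
    (hlam : Order.succ μ ≤ lam)
    {e : ζs.ToType → ζs.ToType → Prop}
    (hsym : ∀ s t, e s t → e t s) (htr : ∀ s t r, e s t → e t r → e s r)
    (hconv : ∀ s t r, e s t → s ≤ r → r ≤ t → e s r) :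
    ∃ hs : lam.ord.ToType → ζs.ToType → (lam.ord * ζs).ToType,
      (∀ ξ, Inc (∅ : Set Ordinal.{v}) (∅ : Set Ordinal.{v}) (fun _ => (0:Ordinal.{v})) (fun _ => (0:Ordinal.{v})) (hs ξ)) ∧
        ∀ ξ ζ, ξ < ζ → EPair e (hs ξ) (hs ζ) := by
  classical
  have hlaminf : Cardinal.aleph0 ≤ lam := hμ.trans ((Order.le_succ μ).trans hlam)
  have hζK : ζs.card ≤ μ := Order.lt_succ_iff.mp (Cardinal.lt_ord.mp hζ2)
  have hζlam : ζs.card < lam := lt_of_le_of_lt hζK (lt_of_lt_of_le (Order.lt_succ μ) hlam)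
  have hΓpos : (0:Ordinal) < lam.ord := by
    rw [Cardinal.lt_ord, Ordinal.card_zero]
    exact lt_of_lt_of_le Cardinal.aleph0_pos hlaminf
  let jj : ζs.ToType → Ordinal := fun t => rko t
  have jj_lt : ∀ t, jj t < ζs := fun t => rko_lt_self t
  have jj_mono : ∀ {s t : ζs.ToType}, s < t → jj s < jj t := fun h => rko_mono h
  let ox : lam.ord.ToType → Ordinal := fun ξ => rko ξ
  have ox_lt : ∀ ξ, ox ξ < lam.ord := fun ξ => rko_lt_self ξ
  let off : lam.ord.ToType → ζs.ToType → Ordinal := fun ξ t => ζs * ox ξ + jj t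
  have hoff : ∀ ξ t, off ξ t < lam.ord := by
    intro ξ t
    show ζs * ox ξ + jj t < lam.ord
    rw [Cardinal.lt_ord, Ordinal.card_add, Ordinal.card_mul]
    exact Cardinal.add_lt_of_lt hlaminf
      (Cardinal.mul_lt_of_lt hlaminf hζlam (Cardinal.lt_ord.mp (ox_lt ξ)))
      (lt_of_le_of_lt (Ordinal.card_le_card (jj_lt t).le) hζlam)
  have hoff_cross : ∀ {ξ ζ}, ξ < ζ → ∀ s t, off ξ t < off ζ s := by
    intro ξ ζ hξζ s t
    exact lt_of_lt_of_le (gap_lt (jj_lt t) (rko_mono hξζ))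
      (le_self_add)
  have hm_le : ∀ {t}, e t t → mcl e t ≤ t := fun h => mcl_le hsym htr h
  have s_lt_m : ∀ {s t : ζs.ToType}, s < t → e t t → ¬ e s t → s < mcl e t :=
    fun hst htt hns => lt_mcl hsym htr hconv htt hst hns
  have jm_lt : ∀ {s t : ζs.ToType}, s < t → e s s → e t t → ¬ e s t →
      jj (mcl e s) < jj (mcl e t) :=
    fun hst hss htt hns => jj_mono (lt_of_le_of_lt (hm_le hss) (s_lt_m hst htt hns))
  set W : lam.ord.ToType → ζs.ToType → Ordinal := fun ξ t =>
    if e t t then lam.ord * jj (mcl e t) + off ξ t else lam.ord * jj t with hWdef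
  have hW_lt : ∀ ξ t, W ξ t < lam.ord * ζs := by
    intro ξ t
    by_cases h : e t t
    · rw [hWdef]
      simp only [if_pos h]
      exact gap_lt (hoff ξ t) (jj_lt (mcl e t))
    · rw [hWdef]
      simp only [if_neg h]
      exact (mul_lt_mul_iff_right₀ hΓpos).mpr (jj_lt t)
  have hW_mono : ∀ ξ, StrictMono (W ξ) := by
    intro ξ s t hst
    by_cases hs : e s s <;> by_cases ht : e t t
    · by_cases hest : e s t
      · have hm : mcl e s = mcl e t := mcl_congr hsym htr hest
        simp only [hWdef, if_pos hs, if_pos ht, hm]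
        exact add_lt_add_right (add_lt_add_right (jj_mono hst) _) _
      · simp only [hWdef, if_pos hs, if_pos ht]
        exact lt_of_lt_of_le (gap_lt (hoff ξ s) (jm_lt hst hs ht hest)) (le_self_add)
    · simp only [hWdef, if_pos hs, if_neg ht]
      exact gap_lt (hoff ξ s) (jj_mono (lt_of_le_of_lt (hm_le hs) hst))
    · simp only [hWdef, if_neg hs, if_pos ht]
      have hns : ¬ e s t := fun h => hs (htr _ _ _ h (hsym _ _ h))
      exact lt_of_lt_of_le ((mul_lt_mul_iff_right₀ hΓpos).mpr
        (jj_mono (s_lt_m hst ht hns))) (le_self_add)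
    · simp only [hWdef, if_neg hs, if_neg ht]
      exact (mul_lt_mul_iff_right₀ hΓpos).mpr (jj_mono hst)
  refine ⟨fun ξ t => toI _ (W ξ t) (hW_lt ξ t),
    fun ξ => inc_triv (fun s t h => (toI_lt_toI _ _).mpr (hW_mono ξ h)), ?_⟩
  intro ξ ζ hξζ
  refine ⟨eDom e, ⟨fun s hs => hs,
    fun s t hest => ⟨fun _ => htr _ _ _ (hsym _ _ hest) hest,
      fun _ => htr _ _ _ hest (hsym _ _ hest)⟩⟩, ?_, ?_, ?_⟩
  · intro s
    constructor
    · intro hns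
      exact (toI_eq_toI _ _).mpr (by simp only [hWdef, if_neg hns])
    · intro heq hs
      have h2 := (toI_eq_toI _ _).mp heq
      simp only [hWdef, if_pos hs] at h2
      exact absurd h2 (ne_of_lt (add_lt_add_right (hoff_cross hξζ s s) _))
  · intro s t hst hss htt hnst
    constructor
    · exact (toI_lt_toI _ _).mpr (by
        simp only [hWdef, if_pos hss, if_pos htt]
        exact lt_of_lt_of_le (gap_lt (hoff ξ s) (jm_lt hst hss htt hnst)) (le_self_add))
    · exact (toI_lt_toI _ _).mpr (by
        simp only [hWdef, if_pos hss, if_pos htt]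
        exact lt_of_lt_of_le (gap_lt (hoff ζ s) (jm_lt hst hss htt hnst)) (le_self_add))
  · intro s t hst hest
    have hss : e s s := htr _ _ _ hest (hsym _ _ hest)
    have htt : e t t := htr _ _ _ (hsym _ _ hest) hest
    have hm : mcl e s = mcl e t := mcl_congr hsym htr hest
    constructor
    · refine iff_of_true ?_ hss
      exact (toI_lt_toI _ _).mpr (by
        simp only [hWdef, if_pos hss, if_pos htt, hm]
        exact add_lt_add_right (hoff_cross hξζ s t) _)
    · refine iff_of_true hss ?_
      exact (toI_lt_toI _ _).mpr (by
        simp only [hWdef, if_pos hss, if_pos htt, hm]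
        exact add_lt_add_right (hoff_cross hξζ t s) _)

end Proof8B
section Proof8C
open Ordinal Cardinal

universe v
variable {μ lam : Cardinal.{u}} {ζs : Ordinal.{u}}

theorem reasonable_main (hμ : Cardinal.aleph0 ≤ μ) (hζ1 : μ.ord ≤ ζs)
    (hζ2 : ζs < (Order.succ μ).ord) (hlam : Order.succ μ ≤ lam)
    {e : ζs.ToType → ζs.ToType → Prop}
    (hsym : ∀ s t, e s t → e t s) (htr : ∀ s t r, e s t → e t r → e s r)
    (hconv : ∀ s t r, e s t → s ≤ r → r ≤ t → e s r)
    {h₁ h₂ : ζs.ToType → (lam.ord * ζs).ToType}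
    (inc₁ : Inc (∅ : Set Ordinal.{v}) (∅ : Set Ordinal.{v}) (fun _ => (0:Ordinal.{v})) (fun _ => (0:Ordinal.{v})) h₁)
    (inc₂ : Inc (∅ : Set Ordinal.{v}) (∅ : Set Ordinal.{v}) (fun _ => (0:Ordinal.{v})) (fun _ => (0:Ordinal.{v})) h₂)
    (hp : EPair e h₁ h₂) :
    ∃ h₁' h₂' h₃' : ζs.ToType → (lam.ord * ζs).ToType, ∃ Y : Set ζs.ToType,
      Inc (∅ : Set Ordinal.{v}) (∅ : Set Ordinal.{v}) (fun _ => (0:Ordinal.{v})) (fun _ => (0:Ordinal.{v})) h₁' ∧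
      Inc (∅ : Set Ordinal.{v}) (∅ : Set Ordinal.{v}) (fun _ => (0:Ordinal.{v})) (fun _ => (0:Ordinal.{v})) h₂' ∧
      Inc (∅ : Set Ordinal.{v}) (∅ : Set Ordinal.{v}) (fun _ => (0:Ordinal.{v})) (fun _ => (0:Ordinal.{v})) h₃' ∧
      ClassSet e Y ∧ qftp ![h₁', h₂'] = qftp ![h₁, h₂] ∧
      StrictPair e Y h₁' h₃' ∧ StrictPair e Y h₂' h₃' := by
  classical
  obtain ⟨Y₀, hCS₀, pa, pb, pc⟩ := hp
  have hζK : ζs.card ≤ μ := Order.lt_succ_iff.mp (Cardinal.lt_ord.mp hζ2)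
  have hsuccinf : Cardinal.aleph0 ≤ Order.succ μ := hμ.trans (Order.le_succ μ)
  have hνadd : ∀ {a b : Ordinal}, a < (Order.succ μ).ord → b < (Order.succ μ).ord →
      a + b < (Order.succ μ).ord := by
    intro a b ha hb
    rw [Cardinal.lt_ord, Ordinal.card_add]
    exact Cardinal.add_lt_of_lt hsuccinf (Cardinal.lt_ord.mp ha) (Cardinal.lt_ord.mp hb)
  have hνmul : ∀ {a b : Ordinal}, a < (Order.succ μ).ord → b < (Order.succ μ).ord →
      a * b < (Order.succ μ).ord := by
    intro a b ha hb
    rw [Cardinal.lt_ord, Ordinal.card_mul]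
    exact Cardinal.mul_lt_of_lt hsuccinf (Cardinal.lt_ord.mp ha) (Cardinal.lt_ord.mp hb)
  have h1ν : (1:Ordinal) < (Order.succ μ).ord := by
    rw [Cardinal.lt_ord, Ordinal.card_one]
    exact lt_of_lt_of_le Cardinal.one_lt_aleph0 hsuccinf
  have hζpos : (0:Ordinal) < ζs := by
    refine lt_of_lt_of_le ?_ hζ1
    rw [Cardinal.lt_ord, Ordinal.card_zero]
    exact lt_of_lt_of_le Cardinal.aleph0_pos hμ
  have hbig : ∀ {a : Ordinal}, a < (Order.succ μ).ord → a < lam.ord * ζs := by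
    intro a ha
    refine lt_of_lt_of_le (lt_of_lt_of_le ha (Cardinal.ord_le_ord.mpr hlam)) ?_
    exact Ordinal.le_mul_left lam.ord hζpos
  let jj : ζs.ToType → Ordinal := fun t => rko t
  have jj_lt : ∀ t, jj t < ζs := fun t => rko_lt_self t
  have jj_mono : ∀ {s t : ζs.ToType}, s < t → jj s < jj t := fun h => rko_mono h
  have hmono₁ : StrictMono h₁ := inc₁.1
  have hmono₂ : StrictMono h₂ := inc₂.1
  set X : Set ((lam.ord * ζs).ToType) := Set.range h₁ ∪ Set.range h₂ with hXdef
  have mem₁ : ∀ t, h₁ t ∈ X := fun t => Or.inl ⟨t, rfl⟩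
  have mem₂ : ∀ t, h₂ t ∈ X := fun t => Or.inr ⟨t, rfl⟩
  have hXcard : #(↥X) < Order.succ μ := by
    have h1 : #(↥X) ≤ ζs.card + ζs.card := by
      rw [hXdef]
      refine le_trans (Cardinal.mk_union_le _ _) (add_le_add ?_ ?_) <;>
        exact le_trans Cardinal.mk_range_le (Cardinal.mk_toType ζs).le
    refine lt_of_le_of_lt (le_trans h1 ?_) (Order.lt_succ μ)
    calc ζs.card + ζs.card ≤ μ + μ := add_le_add hζK hζK
      _ = μ := Cardinal.add_eq_self hμ
  have rν : ∀ x, rnk X x < (Order.succ μ).ord := rnk_lt_ord hsuccinf hXcard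
  let γ : Ordinal := 1 + ζs
  have hγpos : (0:Ordinal) < γ := lt_of_lt_of_le zero_lt_one (le_self_add)
  have hγν : γ < (Order.succ μ).ord := hνadd h1ν hζ2
  have off_pos : ∀ t : ζs.ToType, (0:Ordinal) < 1 + jj t :=
    fun t => lt_of_lt_of_le zero_lt_one (le_self_add)
  have off_lt : ∀ t, 1 + jj t < γ := fun t => add_lt_add_right (jj_lt t) 1
  have edom_of : ∀ {s t : ζs.ToType}, e s t → e s s := fun h => htr _ _ _ h (hsym _ _ h)
  have edom_of' : ∀ {s t : ζs.ToType}, e s t → e t t := fun h => htr _ _ _ (hsym _ _ h) h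
  have hm_le : ∀ {t}, e t t → mcl e t ≤ t := fun h => mcl_le hsym htr h
  have hm_mem : ∀ {t}, e t t → e (mcl e t) t := fun h => mcl_mem h
  let v : ζs.ToType → (lam.ord * ζs).ToType := fun t => min (h₁ (mcl e t)) (h₂ (mcl e t))
  have vmem : ∀ t, v t ∈ X := by
    intro t
    show min (h₁ (mcl e t)) (h₂ (mcl e t)) ∈ X
    rcases min_choice (h₁ (mcl e t)) (h₂ (mcl e t)) with h | h <;> rw [h]
    exacts [mem₁ _, mem₂ _]
  let d : ζs.ToType → Ordinal := fun t => rnk X (v t)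
  have dν : ∀ t, d t < (Order.succ μ).ord := fun t => rν _
  have v_congr : ∀ {s t}, e s t → v s = v t := by
    intro s t h
    show min (h₁ (mcl e s)) (h₂ (mcl e s)) = min (h₁ (mcl e t)) (h₂ (mcl e t))
    rw [mcl_congr hsym htr h]
  have d_congr : ∀ {s t}, e s t → d s = d t := by
    intro s t h
    show rnk X (v s) = rnk X (v t)
    rw [v_congr h]
  have v_le₁ : ∀ {s x : ζs.ToType}, e s s → s ≤ x → v s ≤ h₁ x :=
    fun hss hsx => le_trans (min_le_left _ _) (hmono₁.monotone (le_trans (hm_le hss) hsx))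
  have v_le₂ : ∀ {s x : ζs.ToType}, e s s → s ≤ x → v s ≤ h₂ x :=
    fun hss hsx => le_trans (min_le_right _ _) (hmono₂.monotone (le_trans (hm_le hss) hsx))
  have fact_dom : ∀ {s t : ζs.ToType}, s < t → e s s → e t t → ¬ e s t →
      h₁ s < v t ∧ h₂ s < v t := by
    intro s t hst hss htt hnst
    have hsm : s < mcl e t := lt_mcl hsym htr hconv htt hst hnst
    have hmm : e (mcl e t) (mcl e t) := edom_of (hm_mem htt)
    have hnsm : ¬ e s (mcl e t) := fun h => hnst (htr _ _ _ h (hm_mem htt))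
    obtain ⟨c1, c2⟩ := pb s (mcl e t) hsm hss hmm hnsm
    exact ⟨lt_min (hmono₁ hsm) c1, lt_min c2 (hmono₂ hsm)⟩
  have fact_nodom : ∀ {s t : ζs.ToType}, s < t → ¬ e s s → e t t →
      h₁ s < v t ∧ h₂ s < v t := by
    intro s t hst hns htt
    have hnst : ¬ e s t := fun h => hns (edom_of h)
    have hsm : s < mcl e t := lt_mcl hsym htr hconv htt hst hnst
    have heq : h₁ s = h₂ s := (pa s).1 hns
    refine ⟨lt_min (hmono₁ hsm) ?_, lt_min ?_ (hmono₂ hsm)⟩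
    · rw [heq]; exact hmono₂ hsm
    · rw [← heq]; exact hmono₁ hsm
  have d_lt : ∀ {s t : ζs.ToType}, s < t → e s s → e t t → ¬ e s t → d s < d t := by
    intro s t hst hss htt hnst
    refine (rnk_lt_rnk (vmem s) (vmem t)).mpr ?_
    refine lt_of_le_of_lt (min_le_left _ _) ?_
    have h1' : e (mcl e s) (mcl e s) := edom_of (hm_mem hss)
    have h2' : ¬ e (mcl e s) t := fun h => hnst (htr _ _ _ (hsym _ _ (hm_mem hss)) h)
    exact (fact_dom (lt_of_le_of_lt (hm_le hss) hst) h1' htt h2').1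
  have d_le₁ : ∀ {s x : ζs.ToType}, e s s → s ≤ x → d s ≤ rnk X (h₁ x) :=
    fun hss hsx => rnk_le_rnk (vmem _) (mem₁ _) (v_le₁ hss hsx)
  have d_le₂ : ∀ {s x : ζs.ToType}, e s s → s ≤ x → d s ≤ rnk X (h₂ x) :=
    fun hss hsx => rnk_le_rnk (vmem _) (mem₂ _) (v_le₂ hss hsx)
  -- the third map's ordinal values
  set H₃val : ζs.ToType → Ordinal := fun t =>
    if e t t then γ * d t + (1 + jj t) else γ * (rnk X (h₁ t) + 1) with hH₃def
  have H₃eq : ∀ t, e t t → H₃val t = γ * d t + (1 + jj t) := by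
    intro t h; rw [hH₃def]; simp only [if_pos h]
  have H₃ne : ∀ t, ¬ e t t → H₃val t = γ * (rnk X (h₁ t) + 1) := by
    intro t h; rw [hH₃def]; simp only [if_neg h]
  have BG : ∀ x : (lam.ord * ζs).ToType, γ * (rnk X x + 1) < lam.ord * ζs :=
    fun x => hbig (hνmul hγν (hνadd (rν x) h1ν))
  have BH₃ : ∀ t, H₃val t < lam.ord * ζs := by
    intro t
    by_cases h : e t t
    · rw [H₃eq t h]
      exact hbig (hνadd (hνmul hγν (dν t)) (hνadd h1ν (lt_trans (jj_lt t) hζ2)))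
    · rw [H₃ne t h]
      exact BG _
  have cmpG : ∀ {x y : (lam.ord * ζs).ToType}, x ∈ X → y ∈ X →
      (γ * (rnk X x + 1) < γ * (rnk X y + 1) ↔ x < y) := by
    intro x y hx hy
    rw [mul_lt_mul_iff_right₀ hγpos, Ordinal.add_one_eq_succ, Ordinal.add_one_eq_succ,
      Order.succ_lt_succ_iff]
    exact rnk_lt_rnk hx hy
  have H₃mono : StrictMono (fun t => H₃val t) := by
    intro s t hst
    show H₃val s < H₃val t
    by_cases hs : e s s <;> by_cases ht : e t t
    · by_cases hest : e s t
      · rw [H₃eq s hs, H₃eq t ht, d_congr hest]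
        exact add_lt_add_right (add_lt_add_right (jj_mono hst) 1) _
      · rw [H₃eq s hs, H₃eq t ht]
        exact lt_of_lt_of_le (gap_lt (off_lt s) (d_lt hst hs ht hest)) (le_self_add)
    · rw [H₃eq s hs, H₃ne t ht]
      refine gap_lt (off_lt s) ?_
      exact lt_of_le_of_lt (d_le₁ hs hst.le) (lt_add_pos zero_lt_one)
    · rw [H₃ne s hs, H₃eq t ht]
      have h1' : rnk X (h₁ s) < d t :=
        (rnk_lt_rnk (mem₁ s) (vmem t)).mpr (fact_nodom hst hs ht).1
      refine lt_of_le_of_lt (mul_le_mul_right ?_ γ) (lt_add_pos (off_pos t))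
      rwa [Ordinal.add_one_eq_succ, Order.succ_le_iff]
    · rw [H₃ne s hs, H₃ne t ht]
      exact (cmpG (mem₁ s) (mem₁ t)).mpr (hmono₁ hst)
  -- the generic strict-pair lemma
  have pair : ∀ (g : ζs.ToType → (lam.ord * ζs).ToType) (hgX : ∀ u, g u ∈ X)
      (hg_v : ∀ {s t : ζs.ToType}, s < t → e s s → e t t → ¬ e s t → g s < v t)
      (hg_ge : ∀ {s x : ζs.ToType}, e s s → s ≤ x → v s ≤ g x)
      (hg_eq : ∀ u, ¬ e u u → g u = h₁ u),
      StrictPair e (∅ : Set ζs.ToType)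
        (fun u => toI _ (γ * (rnk X (g u) + 1)) (BG (g u)))
        (fun u => toI _ (H₃val u) (BH₃ u)) := by
    intro g hgX hg_v hg_ge hg_eq
    refine ⟨?_, ?_, ?_⟩
    · intro s
      constructor
      · intro hns
        refine (toI_eq_toI _ _).mpr ?_
        rw [H₃ne s hns, hg_eq s hns]
      · intro heq hss
        have h2 := (toI_eq_toI _ _).mp heq
        rw [H₃eq s hss] at h2
        exact gap_ne hγpos (off_pos s) (off_lt s) h2.symm
    · intro s t hst hss htt hnst
      constructor
      · refine (toI_lt_toI _ _).mpr ?_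
        rw [H₃eq t htt]
        have h1' : rnk X (g s) < d t :=
          (rnk_lt_rnk (hgX s) (vmem t)).mpr (hg_v hst hss htt hnst)
        refine lt_of_le_of_lt (mul_le_mul_right ?_ γ) (lt_add_pos (off_pos t))
        rwa [Ordinal.add_one_eq_succ, Order.succ_le_iff]
      · refine (toI_lt_toI _ _).mpr ?_
        rw [H₃eq s hss]
        refine gap_lt (off_lt s) ?_
        have h1' : d s ≤ rnk X (g t) := rnk_le_rnk (vmem s) (hgX t) (hg_ge hss hst.le)
        exact lt_of_le_of_lt h1' (lt_add_pos zero_lt_one)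
    · intro s t hst hest
      have hss := edom_of hest
      have htt := edom_of' hest
      constructor
      · refine iff_of_false ?_ (Set.notMem_empty s)
        rw [not_lt]
        refine le_of_lt ((toI_lt_toI _ _).mpr ?_)
        rw [H₃eq s hss]
        refine gap_lt (off_lt s) ?_
        have h1' : d s ≤ rnk X (g t) := rnk_le_rnk (vmem s) (hgX t) (hg_ge hss hst.le)
        exact lt_of_le_of_lt h1' (lt_add_pos zero_lt_one)
      · refine iff_of_false (Set.notMem_empty s) ?_
        rw [not_lt]
        refine le_of_lt ((toI_lt_toI _ _).mpr ?_)
        rw [H₃eq t htt]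
        refine gap_lt (off_lt t) ?_
        have h2' : d t ≤ rnk X (g s) := by
          rw [← d_congr hest]
          exact rnk_le_rnk (vmem s) (hgX s) (hg_ge hss le_rfl)
        exact lt_of_le_of_lt h2' (lt_add_pos zero_lt_one)
  refine ⟨fun t => toI _ (γ * (rnk X (h₁ t) + 1)) (BG (h₁ t)),
    fun t => toI _ (γ * (rnk X (h₂ t) + 1)) (BG (h₂ t)),
    fun t => toI _ (H₃val t) (BH₃ t), ∅,
    inc_triv (fun s t h => (toI_lt_toI _ _).mpr ((cmpG (mem₁ s) (mem₁ t)).mpr (hmono₁ h))),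
    inc_triv (fun s t h => (toI_lt_toI _ _).mpr ((cmpG (mem₂ s) (mem₂ t)).mpr (hmono₂ h))),
    inc_triv (fun s t h => (toI_lt_toI _ _).mpr (H₃mono h)),
    ⟨Set.empty_subset _, fun _ _ _ => Iff.rfl⟩, ?_, ?_, ?_⟩
  · ext q
    obtain ⟨ℓ, mm, s, t⟩ := q
    simp only [qftp, Set.mem_setOf_eq]
    have base : ∀ (g g' : ζs.ToType → (lam.ord * ζs).ToType)
        (hg : ∀ u, g u ∈ X) (hg' : ∀ u, g' u ∈ X),
        (toI _ (γ * (rnk X (g s) + 1)) (BG (g s)) < toI _ (γ * (rnk X (g' t) + 1)) (BG (g' t))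
          ↔ g s < g' t) :=
      fun g g' hg hg' => (toI_lt_toI _ _).trans (cmpG (hg s) (hg' t))
    fin_cases ℓ <;> fin_cases mm <;>
      simp only [Matrix.cons_val_zero, Matrix.cons_val_one, Matrix.head_cons, Fin.mk_zero,
        Fin.mk_one] <;>
      first
        | exact base h₁ h₁ mem₁ mem₁
        | exact base h₁ h₂ mem₁ mem₂
        | exact base h₂ h₁ mem₂ mem₁
        | exact base h₂ h₂ mem₂ mem₂
  · exact pair h₁ mem₁ (fun hst hss htt hnst => (fact_dom hst hss htt hnst).1)
      (fun hss hsx => v_le₁ hss hsx) (fun u _ => rfl)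
  · exact pair h₂ mem₂ (fun hst hss htt hnst => (fact_dom hst hss htt hnst).2)
      (fun hss hsx => v_le₂ hss hsx) (fun u hn => ((pa u).1 hn).symm)

end Proof8C
theorem stmt8 (μ : Cardinal.{u}) (hμ : Cardinal.aleph0 ≤ μ)
    (ζs : Ordinal.{u}) (hζ1 : μ.ord ≤ ζs) (hζ2 : ζs < (Order.succ μ).ord)
    (lam : Cardinal.{u}) (hlam : Order.succ μ ≤ lam) :
    Reasonable (J := ζs.ToType) (I := (lam.ord * ζs).ToType)
      (∅ : Set Ordinal) (∅ : Set Ordinal) (fun _ => 0) (fun _ => 0) μ ∧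
    Wide (J := ζs.ToType) (I := (lam.ord * ζs).ToType)
      (∅ : Set Ordinal) (∅ : Set Ordinal) (fun _ => 0) (fun _ => 0) lam μ := by
  have hζK : ζs.card ≤ μ := Order.lt_succ_iff.mp (Cardinal.lt_ord.mp hζ2)
  have hJ : Cardinal.mk ζs.ToType ≤ μ := by rw [Cardinal.mk_toType]; exact hζK
  constructor
  · refine ⟨hJ, exists_e_aux (μ := μ) (ζs := ζs) hμ hlam, ?_⟩
    intro e he h₁ h₂ inc₁ inc₂ hp
    obtain ⟨⟨hsym, htr, hconv⟩, -⟩ := he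
    exact reasonable_main hμ hζ1 hζ2 hlam hsym htr hconv inc₁ inc₂ hp
  · refine ⟨hJ, exists_e_aux (μ := μ) (ζs := ζs) hμ hlam, ?_⟩
    intro e he
    obtain ⟨⟨hsym, htr, hconv⟩, -⟩ := he
    exact wide_main hμ hζ2 hlam hsym htr hconv

end Shelah734
end

section
/- Fix an ordinal α* ≥ 1 and subsets u⁻, u⁺ ⊆ α*. Let J be a colored linear order and I₁ ⊆ I₂ colored linear orders (I₁ carrying the order and partition induced from I₂) such that I₁ ≤¹_J I₂ and such that every member of inc_J(I₁) is, regarded as a function into I₂, a member of inc_J(I₂). If ℰ₁ is an invariant equivalence relation on inc_J(I₁), then there is one and only one invariant equivalence relation ℰ₂ on inc_J(I₂) whose restriction to inc_J(I₁) equals ℰ₁. -/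
universe u

namespace Shelah734

section Aux

variable {J : Type*}

lemma qftp_comp {I I' : Type*} [LinearOrder I] [LinearOrder I'] {n m : ℕ}
    (f : Fin n → Fin m) {hs : Fin m → J → I} {ks : Fin m → J → I'}
    (h : qftp hs = qftp ks) : qftp (hs ∘ f) = qftp (ks ∘ f) := by
  ext ⟨l, m', s, t⟩
  have := Set.ext_iff.mp h (f l, f m', s, t)
  simpa [qftp] using this

lemma comp01 {X : Type*} (a b c : X) : ![a, b, c] ∘ ![(0 : Fin 3), 1] = ![a, b] := by
  funext i; fin_cases i <;> rfl

lemma comp12 {X : Type*} (a b c : X) : ![a, b, c] ∘ ![(1 : Fin 3), 2] = ![b, c] := by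
  funext i; fin_cases i <;> rfl

lemma comp02 {X : Type*} (a b c : X) : ![a, b, c] ∘ ![(0 : Fin 3), 2] = ![a, c] := by
  funext i; fin_cases i <;> rfl

lemma comp10 {X : Type*} (a b : X) : ![a, b] ∘ ![(1 : Fin 2), 0] = ![b, a] := by
  funext i; fin_cases i <;> rfl

lemma qftp_pair_iff {I I' : Type*} [LinearOrder I] [LinearOrder I']
    {a b : J → I} {a' b' : J → I'} (h : qftp ![a, b] = qftp ![a', b']) :
    ∀ s t : J, (a s < b t ↔ a' s < b' t) ∧ (b s < a t ↔ b' s < a' t) := by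
  intro s t
  constructor
  · have := Set.ext_iff.mp h (0, 1, s, t); simpa [qftp] using this
  · have := Set.ext_iff.mp h (1, 0, s, t); simpa [qftp] using this

lemma qftp_coe_pair {I : Type*} [LinearOrder I] {A : Set I} (h₁ h₂ : J → ↥A) :
    qftp ![fun t => ((h₁ t : I)), fun t => ((h₂ t : I))] = qftp ![h₁, h₂] := by
  ext ⟨l, m, s, t⟩
  fin_cases l <;> fin_cases m <;> simp [qftp]

end Aux

theorem stmt10 (αs : Ordinal) (hαs : 1 ≤ αs)
    (um up : Set Ordinal) (hum : um ⊆ Set.Iio αs) (hup : up ⊆ Set.Iio αs)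
    (J I₂ : Type*) [LinearOrder J] [LinearOrder I₂]
    (cJ : J → Ordinal) (cI : I₂ → Ordinal)
    (hcJ : ∀ x, cJ x < αs) (hcI : ∀ x, cI x < αs)
    (A : Set I₂)
    (hsub : ∀ h : J → ↥A, Inc um up cJ (fun a : ↥A => cI ↑a) h →
      Inc um up cJ cI (fun t => (h t : I₂)))
    (hle : Le1 um up cJ cI A)
    (E₁ : (J → ↥A) → (J → ↥A) → Prop)
    (hE₁ : InvariantER um up cJ (fun a : ↥A => cI ↑a) E₁) :
    ∃ E₂ : (J → I₂) → (J → I₂) → Prop,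
      (InvariantER um up cJ cI E₂ ∧
        ∀ h₁ h₂ : J → ↥A, Inc um up cJ (fun a : ↥A => cI ↑a) h₁ →
          Inc um up cJ (fun a : ↥A => cI ↑a) h₂ →
            (E₂ (fun t => (h₁ t : I₂)) (fun t => (h₂ t : I₂)) ↔ E₁ h₁ h₂)) ∧
      ∀ E₂' : (J → I₂) → (J → I₂) → Prop,
        (InvariantER um up cJ cI E₂' ∧
          ∀ h₁ h₂ : J → ↥A, Inc um up cJ (fun a : ↥A => cI ↑a) h₁ →
            Inc um up cJ (fun a : ↥A => cI ↑a) h₂ →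
              (E₂' (fun t => (h₁ t : I₂)) (fun t => (h₂ t : I₂)) ↔ E₁ h₁ h₂)) →
        ∀ g₁ g₂ : J → I₂, Inc um up cJ cI g₁ → Inc um up cJ cI g₂ →
          (E₂ g₁ g₂ ↔ E₂' g₁ g₂) := by
  classical
  set IncA : (J → ↥A) → Prop := Inc um up cJ (fun a : ↥A => cI ↑a) with hIncA
  obtain ⟨e₁refl, e₁symm, e₁trans, e₁inv⟩ := hE₁
  -- the candidate relation
  set E₂ : (J → I₂) → (J → I₂) → Prop := fun g₁ g₂ =>
    Inc um up cJ cI g₁ ∧ Inc um up cJ cI g₂ ∧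
      ∃ k₁ k₂ : J → ↥A, IncA k₁ ∧ IncA k₂ ∧
        qftp ![k₁, k₂] = qftp ![g₁, g₂] ∧ E₁ k₁ k₂ with hE₂def
  -- restriction property
  have hrestr : ∀ h₁ h₂ : J → ↥A, IncA h₁ → IncA h₂ →
      (E₂ (fun t => (h₁ t : I₂)) (fun t => (h₂ t : I₂)) ↔ E₁ h₁ h₂) := by
    intro h₁ h₂ ih₁ ih₂
    constructor
    · rintro ⟨-, -, k₁, k₂, ik₁, ik₂, hq, hk⟩
      have hq2 : qftp ![k₁, k₂] = qftp ![h₁, h₂] := by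
        rw [hq, qftp_coe_pair]
      exact (e₁inv k₁ k₂ h₁ h₂ ik₁ ik₂ ih₁ ih₂ hq2).mp hk
    · intro hk
      exact ⟨hsub h₁ ih₁, hsub h₂ ih₂, h₁, h₂, ih₁, ih₂,
        (qftp_coe_pair h₁ h₂).symm, hk⟩
  -- existence of reflections into A
  have reflect : ∀ g₁ g₂ g₃ : J → I₂, Inc um up cJ cI g₁ → Inc um up cJ cI g₂ →
      Inc um up cJ cI g₃ →
      ∃ k₁ k₂ k₃ : J → ↥A, IncA k₁ ∧ IncA k₂ ∧ IncA k₃ ∧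
        qftp ![k₁, k₂] = qftp ![g₁, g₂] ∧ qftp ![k₂, k₃] = qftp ![g₂, g₃] ∧
        qftp ![k₁, k₃] = qftp ![g₁, g₃] := by
    intro g₁ g₂ g₃ i₁ i₂ i₃
    obtain ⟨k₁, k₂, k₃, ik₁, ik₂, ik₃, hq⟩ := hle g₁ g₂ g₃ i₁ i₂ i₃
    refine ⟨k₁, k₂, k₃, ik₁, ik₂, ik₃, ?_, ?_, ?_⟩
    · have := qftp_comp ![(0 : Fin 3), 1] hq
      rwa [comp01, comp01] at this
    · have := qftp_comp ![(1 : Fin 3), 2] hq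
      rwa [comp12, comp12] at this
    · have := qftp_comp ![(0 : Fin 3), 2] hq
      rwa [comp02, comp02] at this
  -- E₂ is an invariant equivalence relation
  have hinvE₂ : InvariantER um up cJ cI E₂ := by
    refine ⟨?_, ?_, ?_, ?_⟩
    · -- reflexivity
      intro h ih
      obtain ⟨k₁, k₂, k₃, ik₁, ik₂, ik₃, hq, -, -⟩ := reflect h h h ih ih ih
      have hk12 : k₁ = k₂ := by
        funext s
        have hst := qftp_pair_iff hq s s
        have h1 : ¬ k₁ s < k₂ s := fun hl => lt_irrefl _ (hst.1.mp hl)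
        have h2 : ¬ k₂ s < k₁ s := fun hl => lt_irrefl _ (hst.2.mp hl)
        exact le_antisymm (not_lt.mp h2) (not_lt.mp h1)
      exact ⟨ih, ih, k₁, k₂, ik₁, ik₂, hq, hk12 ▸ e₁refl k₁ ik₁⟩
    · -- symmetry
      rintro g₁ g₂ i₁ i₂ ⟨-, -, k₁, k₂, ik₁, ik₂, hq, hk⟩
      refine ⟨i₂, i₁, k₂, k₁, ik₂, ik₁, ?_, e₁symm k₁ k₂ ik₁ ik₂ hk⟩
      have := qftp_comp ![(1 : Fin 2), 0] hq
      rwa [comp10, comp10] at this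
    · -- transitivity
      rintro g₁ g₂ g₃ i₁ i₂ i₃ ⟨-, -, k₁, k₂, ik₁, ik₂, hq12, hk12⟩
        ⟨-, -, l₂, l₃, il₂, il₃, hq23, hl23⟩
      obtain ⟨m₁, m₂, m₃, im₁, im₂, im₃, hm12, hm23, hm13⟩ :=
        reflect g₁ g₂ g₃ i₁ i₂ i₃
      have e12 : E₁ m₁ m₂ :=
        (e₁inv k₁ k₂ m₁ m₂ ik₁ ik₂ im₁ im₂ (hq12.trans hm12.symm)).mp hk12
      have e23 : E₁ m₂ m₃ :=
        (e₁inv l₂ l₃ m₂ m₃ il₂ il₃ im₂ im₃ (hq23.trans hm23.symm)).mp hl23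
      exact ⟨i₁, i₃, m₁, m₃, im₁, im₃, hm13,
        e₁trans m₁ m₂ m₃ im₁ im₂ im₃ e12 e23⟩
    · -- invariance
      rintro g₁ g₂ g₃ g₄ i₁ i₂ i₃ i₄ hq
      constructor
      · rintro ⟨-, -, k₁, k₂, ik₁, ik₂, hqk, hk⟩
        exact ⟨i₃, i₄, k₁, k₂, ik₁, ik₂, hqk.trans hq, hk⟩
      · rintro ⟨-, -, k₁, k₂, ik₁, ik₂, hqk, hk⟩
        exact ⟨i₁, i₂, k₁, k₂, ik₁, ik₂, hqk.trans hq.symm, hk⟩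
  -- characterization of any relation with the two properties
  have char : ∀ E' : (J → I₂) → (J → I₂) → Prop,
      InvariantER um up cJ cI E' →
      (∀ h₁ h₂ : J → ↥A, IncA h₁ → IncA h₂ →
        (E' (fun t => (h₁ t : I₂)) (fun t => (h₂ t : I₂)) ↔ E₁ h₁ h₂)) →
      ∀ g₁ g₂ : J → I₂, Inc um up cJ cI g₁ → Inc um up cJ cI g₂ →
      ∀ k₁ k₂ : J → ↥A, IncA k₁ → IncA k₂ →
        qftp ![k₁, k₂] = qftp ![g₁, g₂] → (E' g₁ g₂ ↔ E₁ k₁ k₂) := by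
    intro E' hinv' hres' g₁ g₂ i₁ i₂ k₁ k₂ ik₁ ik₂ hq
    have hq' : qftp ![fun t => (k₁ t : I₂), fun t => (k₂ t : I₂)]
        = qftp ![g₁, g₂] := (qftp_coe_pair k₁ k₂).trans hq
    have := hinv'.2.2.2 (fun t => (k₁ t : I₂)) (fun t => (k₂ t : I₂)) g₁ g₂
      (hsub k₁ ik₁) (hsub k₂ ik₂) i₁ i₂ hq'
    exact (this.symm.trans (hres' k₁ k₂ ik₁ ik₂))
  refine ⟨E₂, ⟨hinvE₂, hrestr⟩, ?_⟩
  rintro E₂' ⟨hinv', hres'⟩ g₁ g₂ i₁ i₂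
  obtain ⟨k₁, k₂, k₃, ik₁, ik₂, ik₃, hq, -, -⟩ := reflect g₁ g₂ g₁ i₁ i₂ i₁
  rw [char E₂ hinvE₂ hrestr g₁ g₂ i₁ i₂ k₁ k₂ ik₁ ik₂ hq,
    char E₂' hinv' hres' g₁ g₂ i₁ i₂ k₁ k₂ ik₁ ik₂ hq]

end Shelah734
end

section
/- Let α* = 1 and u⁻ = u⁺ = ∅, so that colored linear orders are just linear orders and inc_J(I) is the set of strictly order-preserving maps from J to I. Let μ be an infinite cardinal, ζ* an ordinal with μ ≤ ζ* < μ⁺, and β₁ ≤ β₂ ordinals with μ⁺ ≤ β₁. Then, with J the ordinal ζ*, I₁ the ordinal β₁ and I₂ the ordinal β₂ (all as linear orders, I₁ an initial segment of I₂), we have I₁ ≤¹_J I₂. -/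
universe u

namespace Shelah734

/-- The ordinal corresponding to an element of `β.toType`. -/
noncomputable def ordValue {β : Ordinal.{u}} (x : β.ToType) : Ordinal.{u} :=
  ((Ordinal.ToType.mk (o := β)).symm x).1

/-- The coloring of the colored linear order `I^lin_{μ,β,w}` (with `α* = 2`):
an element gets color `1` iff its ordinal value has cofinality `> μ` or lies in `w`. -/
noncomputable def IlinCol (μ : Cardinal.{u}) (β : Ordinal.{u}) (w : Set Ordinal.{u}) :
    β.ToType → Ordinal :=
  fun x =>
    haveI := Classical.propDecidable (μ < (ordValue x).cof ∨ ordValue x ∈ w)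
    if μ < (ordValue x).cof ∨ ordValue x ∈ w then 1 else 0

theorem stmt12 (μ : Cardinal.{u}) (hμ : Cardinal.aleph0 ≤ μ)
    (ζs : Ordinal.{u}) (hζ1 : μ.ord ≤ ζs) (hζ2 : ζs < (Order.succ μ).ord)
    (β₁ β₂ : Ordinal.{u}) (hβ₁ : (Order.succ μ).ord ≤ β₁) (hβ : β₁ ≤ β₂) :
    Le1 (J := ζs.ToType) (I := β₂.ToType)
      (∅ : Set Ordinal) (∅ : Set Ordinal) (fun _ => 0) (fun _ => 0)
      {x : β₂.ToType | ordValue x < β₁} := by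
  intro h₁ h₂ h₃ hi₁ hi₂ hi₃
  set A : Set β₂.ToType := {x : β₂.ToType | ordValue x < β₁} with hA
  set S : Set β₂.ToType := Set.range h₁ ∪ Set.range h₂ ∪ Set.range h₃ with hS
  -- cardinality of S is at most μ
  have hcard : Cardinal.mk ↥S ≤ μ := by
    have hJ : Cardinal.mk ζs.ToType ≤ μ := by
      rw [Cardinal.mk_toType]
      exact Order.lt_succ_iff.mp (Cardinal.lt_ord.mp hζ2)
    have h1 : Cardinal.mk ↥S ≤ Cardinal.mk ζs.ToType + Cardinal.mk ζs.ToType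
        + Cardinal.mk ζs.ToType := by
      refine le_trans (Cardinal.mk_union_le _ _) ?_
      gcongr
      · refine le_trans (Cardinal.mk_union_le _ _) ?_
        gcongr <;> exact Cardinal.mk_range_le
      · exact Cardinal.mk_range_le
    refine le_trans h1 ?_
    have : μ + μ + μ = μ := by
      rw [Cardinal.add_eq_self hμ, Cardinal.add_eq_self hμ]
    calc Cardinal.mk ζs.ToType + Cardinal.mk ζs.ToType + Cardinal.mk ζs.ToType
        ≤ μ + μ + μ := by gcongr
      _ = μ := this
  -- order type of S is less than β₁
  have htype : Ordinal.type ((· < ·) : ↥S → ↥S → Prop) < β₁ := by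
    refine lt_of_lt_of_le ?_ hβ₁
    rw [Cardinal.lt_ord, Ordinal.card_type]
    exact lt_of_le_of_lt hcard (Order.lt_succ μ)
  -- the collapse map
  let g : ↥S → ↥A := fun x =>
    ⟨Ordinal.ToType.mk (o := β₂)
        ⟨Ordinal.typein ((· < ·) : ↥S → ↥S → Prop) x,
          lt_of_lt_of_le ((Ordinal.typein_lt_type _ x).trans htype) hβ⟩, by
      simp only [hA, Set.mem_setOf_eq, ordValue]
      rw [OrderIso.symm_apply_apply]
      exact (Ordinal.typein_lt_type _ x).trans htype⟩
  have hg : ∀ x y : ↥S, g x < g y ↔ x < y := by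
    intro x y
    show (Ordinal.ToType.mk (o := β₂) _ : β₂.ToType) < Ordinal.ToType.mk (o := β₂) _ ↔ _
    rw [OrderIso.lt_iff_lt]
    show (⟨_, _⟩ : Set.Iio β₂) < ⟨_, _⟩ ↔ _
    rw [Subtype.mk_lt_mk]
    exact Ordinal.typein_lt_typein _
  -- the new maps
  have m₁ : ∀ t, h₁ t ∈ S := fun t => Or.inl (Or.inl ⟨t, rfl⟩)
  have m₂ : ∀ t, h₂ t ∈ S := fun t => Or.inl (Or.inr ⟨t, rfl⟩)
  have m₃ : ∀ t, h₃ t ∈ S := fun t => Or.inr ⟨t, rfl⟩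
  refine ⟨fun t => g ⟨h₁ t, m₁ t⟩, fun t => g ⟨h₂ t, m₂ t⟩, fun t => g ⟨h₃ t, m₃ t⟩,
    ?_, ?_, ?_, ?_⟩
  · exact ⟨fun s t hst => (hg _ _).mpr (hi₁.1 hst), fun t => rfl,
      fun t h => absurd h (Set.notMem_empty _), fun t h => absurd h (Set.notMem_empty _)⟩
  · exact ⟨fun s t hst => (hg _ _).mpr (hi₂.1 hst), fun t => rfl,
      fun t h => absurd h (Set.notMem_empty _), fun t h => absurd h (Set.notMem_empty _)⟩
  · exact ⟨fun s t hst => (hg _ _).mpr (hi₃.1 hst), fun t => rfl,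
      fun t h => absurd h (Set.notMem_empty _), fun t h => absurd h (Set.notMem_empty _)⟩
  · ext ⟨ℓ, m, s, t⟩
    simp only [qftp, Set.mem_setOf_eq]
    have key : ∀ (u v : ↥S), (g u : β₂.ToType) < g v ↔ (u : β₂.ToType) < v := by
      intro u v
      rw [show ((g u : ↥A) : β₂.ToType) < (g v : ↥A) ↔ g u < g v from Iff.rfl, hg]
      exact Iff.rfl
    fin_cases ℓ <;> fin_cases m <;>
      simp only [Matrix.cons_val_zero, Matrix.cons_val_one, Matrix.head_cons,
        Matrix.cons_val_two, Matrix.tail_cons] <;>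
      exact key _ _

end Shelah734
end

section
/- Let α* = 2, u⁻ = {0}, u⁺ = ∅. Let μ be an infinite cardinal, ζ* an ordinal with μ ≤ ζ* < μ⁺, w ⊆ ζ*, and β₁ ≤ β₂ ordinals with μ⁺⁺ ≤ β₁. Then, with J = I^lin_{μ,ζ*,w}, I₁ = I^lin_{μ,β₁} and I₂ = I^lin_{μ,β₂} (so that I₁ is a colored suborder of I₂), we have I₁ ≤¹_J I₂. -/
universe u

namespace Shelah734

section Collapse

open Ordinal Cardinal Set

instance smallInterIio (X : Set Ordinal.{u}) (x : Ordinal.{u}) :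
    Small.{u} ↥(X ∩ Set.Iio x) :=
  small_subset Set.inter_subset_right

/-- The collapsing function. -/
noncomputable def collapse (μ : Cardinal.{u}) (X : Set Ordinal.{u}) (x : Ordinal.{u}) :
    Ordinal.{u} :=
  (⨆ y : ↥(X ∩ Set.Iio x), collapse μ X y.1 + 1) +
    (haveI := Classical.propDecidable (μ < x.cof)
     if μ < x.cof then (Order.succ μ).ord else 0)
termination_by x
decreasing_by exact y.2.2

noncomputable def csup (μ : Cardinal.{u}) (X : Set Ordinal.{u}) (x : Ordinal.{u}) :
    Ordinal.{u} :=
  ⨆ y : ↥(X ∩ Set.Iio x), collapse μ X y.1 + 1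

theorem collapse_eq (μ : Cardinal.{u}) (X : Set Ordinal.{u}) (x : Ordinal.{u}) :
    collapse μ X x = csup μ X x +
      (haveI := Classical.propDecidable (μ < x.cof)
       if μ < x.cof then (Order.succ μ).ord else 0) := by
  rw [collapse]; rfl

theorem le_csup {μ : Cardinal.{u}} {X : Set Ordinal.{u}} {y x : Ordinal.{u}}
    (hy : y ∈ X) (hlt : y < x) : collapse μ X y + 1 ≤ csup μ X x :=
  Ordinal.le_iSup (fun y : ↥(X ∩ Set.Iio x) => collapse μ X y.1 + 1) ⟨y, hy, hlt⟩

theorem csup_le_collapse (μ : Cardinal.{u}) (X : Set Ordinal.{u}) (x : Ordinal.{u}) :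
    csup μ X x ≤ collapse μ X x := by
  rw [collapse_eq]; exact le_self_add

theorem collapse_strictMonoOn {μ : Cardinal.{u}} {X : Set Ordinal.{u}} {y x : Ordinal.{u}}
    (hy : y ∈ X) (hlt : y < x) : collapse μ X y < collapse μ X x :=
  calc collapse μ X y < collapse μ X y + 1 := by
        rw [Ordinal.add_one_eq_succ]; exact Order.lt_succ _
  _ ≤ csup μ X x := le_csup hy hlt
  _ ≤ collapse μ X x := csup_le_collapse μ X x

theorem collapse_monoOn {μ : Cardinal.{u}} {X : Set Ordinal.{u}} {y x : Ordinal.{u}}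
    (hy : y ∈ X) (h : y ≤ x) : collapse μ X y ≤ collapse μ X x :=
  h.lt_or_eq.elim (fun h' => (collapse_strictMonoOn hy h').le) (fun h' => by rw [h'])

theorem collapse_approx {μ : Cardinal.{u}} {X : Set Ordinal.{u}} {x : Ordinal.{u}}
    (hcof : ¬ μ < x.cof) {s : Ordinal.{u}} (hs : s < collapse μ X x) :
    ∃ y ∈ X, y < x ∧ s ≤ collapse μ X y := by
  rw [collapse_eq, if_neg hcof, add_zero] at hs
  obtain ⟨y, hy⟩ := Ordinal.lt_iSup_iff.1 hs
  exact ⟨y.1, y.2.1, y.2.2, by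
    rwa [Ordinal.add_one_eq_succ, Order.lt_succ_iff] at hy⟩

theorem csup_eq_shrink (μ : Cardinal.{u}) (X : Set Ordinal.{u}) (x : Ordinal.{u}) :
    csup μ X x = ⨆ i : Shrink.{u} ↥(X ∩ Set.Iio x),
      (collapse μ X ((equivShrink ↥(X ∩ Set.Iio x)).symm i).1 + 1) := by
  have hs : Set.range ((fun y : ↥(X ∩ Set.Iio x) => collapse μ X y.1 + 1) ∘
      (equivShrink ↥(X ∩ Set.Iio x)).symm) =
      Set.range (fun y : ↥(X ∩ Set.Iio x) => collapse μ X y.1 + 1) :=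
    (Equiv.surjective _).range_comp _
  rw [csup, iSup, iSup]
  exact congrArg sSup hs.symm

theorem shrink_card_le {μ : Cardinal.{u}} {X : Set Ordinal.{u}} {T : Type u}
    {σ : T → Ordinal.{u}} (hX : X ⊆ Set.range σ) (hT : #T ≤ μ) (x : Ordinal.{u}) :
    #(Shrink.{u} ↥(X ∩ Set.Iio x)) ≤ μ := by
  have hsurj : Function.Surjective (fun t : {t : T // σ t ∈ X ∩ Set.Iio x} =>
      equivShrink ↥(X ∩ Set.Iio x) ⟨σ t.1, t.2⟩) := by
    intro i
    obtain ⟨t, ht⟩ := hX ((equivShrink ↥(X ∩ Set.Iio x)).symm i).2.1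
    refine ⟨⟨t, ?_⟩, ?_⟩
    · rw [ht]; exact ((equivShrink ↥(X ∩ Set.Iio x)).symm i).2
    · simp only
      rw [show (⟨σ t, ht ▸ ((equivShrink ↥(X ∩ Set.Iio x)).symm i).2⟩ :
          ↥(X ∩ Set.Iio x)) = (equivShrink ↥(X ∩ Set.Iio x)).symm i from Subtype.ext ht]
      exact Equiv.apply_symm_apply _ i
  exact (Cardinal.mk_le_of_surjective hsurj).trans ((Cardinal.mk_subtype_le _).trans hT)

theorem cof_csup_le {μ : Cardinal.{u}} {X : Set Ordinal.{u}} {T : Type u}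
    {σ : T → Ordinal.{u}} (hX : X ⊆ Set.range σ) (hT : #T ≤ μ) (hμ : ℵ₀ ≤ μ)
    (x : Ordinal.{u}) : (csup μ X x).cof ≤ μ := by
  by_cases hat : ∃ y : ↥(X ∩ Set.Iio x), csup μ X x ≤ collapse μ X y.1 + 1
  · obtain ⟨y, hy⟩ := hat
    have heq : csup μ X x = collapse μ X y.1 + 1 :=
      le_antisymm hy (Ordinal.le_iSup (fun y : ↥(X ∩ Set.Iio x) => collapse μ X y.1 + 1) y)
    rw [heq, Ordinal.add_one_eq_succ, Ordinal.cof_succ]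
    exact one_le_aleph0.trans hμ
  · push_neg at hat
    rw [csup_eq_shrink]
    refine le_trans (Ordinal.cof_iSup_le ?_) (shrink_card_le hX hT x)
    intro i
    rw [← csup_eq_shrink]
    exact hat ((equivShrink ↥(X ∩ Set.Iio x)).symm i)

theorem collapse_cof_iff {μ : Cardinal.{u}} {X : Set Ordinal.{u}} {T : Type u}
    {σ : T → Ordinal.{u}} (hX : X ⊆ Set.range σ) (hT : #T ≤ μ) (hμ : ℵ₀ ≤ μ)
    (x : Ordinal.{u}) : μ < (collapse μ X x).cof ↔ μ < x.cof := by
  rw [collapse_eq]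
  by_cases h : μ < x.cof
  · rw [if_pos h]
    have hne : (Order.succ μ).ord ≠ 0 := by
      rw [Ne, Cardinal.ord_eq_zero]
      exact (lt_of_lt_of_le (aleph0_pos.trans_le hμ) (Order.le_succ μ)).ne'
    rw [Ordinal.cof_add _ hne, (Cardinal.isRegular_succ hμ).cof_eq]
    simp only [h, iff_true]; exact Order.lt_succ μ
  · rw [if_neg h, add_zero]
    simp only [h, iff_false]
    exact not_lt.2 (cof_csup_le hX hT hμ x)

theorem collapse_lt {μ : Cardinal.{u}} {X : Set Ordinal.{u}} {T : Type u}
    {σ : T → Ordinal.{u}} (hX : X ⊆ Set.range σ) (hT : #T ≤ μ) (hμ : ℵ₀ ≤ μ)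
    (x : Ordinal.{u}) : collapse μ X x < (Order.succ (Order.succ μ)).ord := by
  induction x using Ordinal.induction with
  | _ x ih =>
    have hκ : ℵ₀ ≤ Order.succ (Order.succ μ) :=
      hμ.trans ((Order.le_succ μ).trans (Order.le_succ _))
    have hreg := Cardinal.isRegular_succ (hμ.trans (Order.le_succ μ))
    have hlim := Cardinal.isSuccLimit_ord hκ
    have hcs : csup μ X x < (Order.succ (Order.succ μ)).ord := by
      rw [csup_eq_shrink]
      refine Cardinal.iSup_lt_ord_of_isRegular hreg
        (lt_of_le_of_lt (shrink_card_le hX hT x)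
          (lt_of_lt_of_le (Order.lt_succ μ) (Order.le_succ _))) ?_
      intro i
      rw [Ordinal.add_one_eq_succ]
      exact hlim.succ_lt (ih _ ((equivShrink ↥(X ∩ Set.Iio x)).symm i).2.2)
    rw [collapse_eq]
    by_cases h : μ < x.cof
    · rw [if_pos h]
      exact Ordinal.isPrincipal_add_ord hκ hcs (Cardinal.ord_lt_ord.2 (Order.lt_succ _))
    · rw [if_neg h, add_zero]; exact hcs


end Collapse

section Helpers

open Ordinal Cardinal Set

theorem ordValue_lt {β : Ordinal.{u}} (x : β.ToType) : ordValue x < β :=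
  ((Ordinal.ToType.mk (o := β)).symm x).2

theorem ordValue_lt_iff {β : Ordinal.{u}} {x y : β.ToType} :
    ordValue x < ordValue y ↔ x < y :=
  Iff.trans Subtype.coe_lt_coe (Ordinal.ToType.mk (o := β)).symm.lt_iff_lt

theorem ordValue_le_iff {β : Ordinal.{u}} {x y : β.ToType} :
    ordValue x ≤ ordValue y ↔ x ≤ y :=
  Iff.trans Subtype.coe_le_coe (Ordinal.ToType.mk (o := β)).symm.le_iff_le

@[simp] theorem ordValue_enum {β : Ordinal.{u}} (o : Set.Iio β) :
    ordValue ((Ordinal.ToType.mk (o := β)) o) = o := by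
  rw [ordValue, OrderIso.symm_apply_apply]

theorem IlinCol_eq_zero_iff {μ : Cardinal.{u}} {β : Ordinal.{u}} {w : Set Ordinal.{u}}
    (x : β.ToType) :
    IlinCol μ β w x = 0 ↔ ¬(μ < (ordValue x).cof ∨ ordValue x ∈ w) := by
  classical
  unfold IlinCol
  split_ifs with h <;> simp [h]

theorem IlinCol_congr {μ : Cardinal.{u}} {β β' : Ordinal.{u}} {w w' : Set Ordinal.{u}}
    {x : β.ToType} {y : β'.ToType}
    (h : (μ < (ordValue x).cof ∨ ordValue x ∈ w) ↔ (μ < (ordValue y).cof ∨ ordValue y ∈ w')) :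
    IlinCol μ β w x = IlinCol μ β' w' y := by
  unfold IlinCol
  exact @if_congr _ _ _ (Classical.propDecidable _) (Classical.propDecidable _) _ _ _ _ h rfl rfl

end Helpers

theorem stmt13 (μ : Cardinal.{u}) (hμ : Cardinal.aleph0 ≤ μ)
    (ζs : Ordinal.{u}) (hζ1 : μ.ord ≤ ζs) (hζ2 : ζs < (Order.succ μ).ord)
    (w : Set Ordinal.{u}) (hw : w ⊆ Set.Iio ζs)
    (β₁ β₂ : Ordinal.{u}) (hβ₁ : (Order.succ (Order.succ μ)).ord ≤ β₁)
    (hβ : β₁ ≤ β₂) :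
    Le1 (J := ζs.ToType) (I := β₂.ToType)
      ({0} : Set Ordinal) (∅ : Set Ordinal)
      (IlinCol μ ζs w) (IlinCol μ β₂ ∅)
      {x : β₂.ToType | ordValue x < β₁} := by
  classical
  intro h₁ h₂ h₃ hI1 hI2 hI3
  set hvec : Fin 3 → ζs.ToType → β₂.ToType := ![h₁, h₂, h₃] with hvec_def
  have hInc : ∀ i, Inc {0} ∅ (IlinCol μ ζs w) (IlinCol μ β₂ ∅) (hvec i) := by
    intro i; fin_cases i <;> assumption
  set σ : Fin 3 × ζs.ToType → Ordinal.{u} := fun p => ordValue (hvec p.1 p.2) with σ_def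
  set X : Set Ordinal.{u} := Set.range σ with X_def
  have hT : Cardinal.mk.{u} (Fin 3 × ζs.ToType) ≤ μ := by
    have h1 : Cardinal.mk.{u} (ζs.ToType) ≤ μ := by
      rw [Cardinal.mk_toType]
      exact Order.lt_succ_iff.1 (Cardinal.lt_ord.1 hζ2)
    have h3 : ((3 : ℕ) : Cardinal.{u}) ≤ μ := (Cardinal.nat_lt_aleph0 3).le.trans hμ
    calc Cardinal.mk.{u} (Fin 3 × ζs.ToType)
        = Cardinal.lift.{u} (Cardinal.mk (Fin 3)) * Cardinal.lift.{0} (Cardinal.mk ζs.ToType) :=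
          Cardinal.mk_prod _ _
    _ = ((3 : ℕ) : Cardinal.{u}) * Cardinal.mk.{u} (ζs.ToType) := by
          simp
    _ ≤ μ * μ := mul_le_mul' h3 h1
    _ = μ := Cardinal.mul_eq_self hμ
  have hXsub : X ⊆ Set.range σ := le_refl _
  have hXmem : ∀ i t, ordValue (hvec i t) ∈ X := fun i t => ⟨(i, t), rfl⟩
  have hboundκ : ∀ z, collapse μ X z < (Order.succ (Order.succ μ)).ord :=
    fun z => collapse_lt hXsub hT hμ z
  have hbound1 : ∀ z, collapse μ X z < β₁ := fun z => lt_of_lt_of_le (hboundκ z) hβ₁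
  have hbound : ∀ z, collapse μ X z < β₂ := fun z => lt_of_lt_of_le (hbound1 z) hβ
  set Φ : β₂.ToType → ↥{x : β₂.ToType | ordValue x < β₁} := fun z =>
    ⟨Ordinal.ToType.mk (o := β₂) ⟨collapse μ X (ordValue z), hbound _⟩, by
      simpa using hbound1 (ordValue z)⟩ with Φ_def
  have hΦval : ∀ z, ordValue ((Φ z : β₂.ToType)) = collapse μ X (ordValue z) := by
    intro z; simp [Φ_def]
  have hΦlt : ∀ a b : β₂.ToType, ordValue a ∈ X → ordValue b ∈ X → (Φ a < Φ b ↔ a < b) := by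
    intro a b ha hb
    rw [← Subtype.coe_lt_coe, ← ordValue_lt_iff (x := (Φ a : β₂.ToType)), hΦval, hΦval,
      ← ordValue_lt_iff (x := a)]
    constructor
    · intro h
      rcases lt_trichotomy (ordValue a) (ordValue b) with h' | h' | h'
      · exact h'
      · rw [h'] at h; exact absurd h (lt_irrefl _)
      · exact absurd (collapse_strictMonoOn hb h') (not_lt.2 h.le)
    · exact fun h => collapse_strictMonoOn ha h
  have hΦcol : ∀ z : β₂.ToType, IlinCol μ β₂ ∅ ((Φ z : β₂.ToType)) = IlinCol μ β₂ ∅ z := by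
    intro z
    apply IlinCol_congr
    rw [hΦval]
    simp only [Set.mem_empty_iff_false, or_false]
    exact collapse_cof_iff hXsub hT hμ _
  have hIncH : ∀ i, Inc {0} ∅ (IlinCol μ ζs w)
      (fun a : ↥{x : β₂.ToType | ordValue x < β₁} => IlinCol μ β₂ ∅ ↑a)
      (fun t => Φ (hvec i t)) := by
    intro i
    obtain ⟨hm, hc, hb, -⟩ := hInc i
    refine ⟨?_, ?_, ?_, ?_⟩
    · intro s t hst
      exact (hΦlt _ _ (hXmem i s) (hXmem i t)).2 (hm hst)
    · intro t
      show IlinCol μ β₂ ∅ ((Φ (hvec i t) : β₂.ToType)) = _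
      rw [hΦcol]; exact hc t
    · intro t ht s hs
      have ht0 : IlinCol μ ζs w t = 0 := ht
      have hcof : ¬ μ < (ordValue (hvec i t)).cof := by
        have hzero : IlinCol μ β₂ ∅ (hvec i t) = 0 := by rw [hc t, ht0]
        have := (IlinCol_eq_zero_iff (hvec i t)).1 hzero
        simpa using this
      have hs' : ordValue ((s : β₂.ToType)) < collapse μ X (ordValue (hvec i t)) := by
        rw [← hΦval]
        exact ordValue_lt_iff.2 (Subtype.coe_lt_coe.2 hs)
      obtain ⟨y, hyX, hylt, hyle⟩ := collapse_approx hcof hs'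
      have hyβ : y < β₂ := hylt.trans (ordValue_lt _)
      have hsI : Ordinal.ToType.mk (o := β₂) ⟨y, hyβ⟩ < hvec i t := by
        rw [← ordValue_lt_iff, ordValue_enum]; exact hylt
      obtain ⟨t₁, ht₁, hle₁⟩ := hb t ht _ hsI
      refine ⟨t₁, ht₁, ?_⟩
      rw [← Subtype.coe_le_coe, ← ordValue_le_iff (x := (s : β₂.ToType)), hΦval]
      have hy1 : y ≤ ordValue (hvec i t₁) := by
        have := ordValue_le_iff.2 hle₁
        rwa [ordValue_enum] at this
      calc ordValue ((s : β₂.ToType)) ≤ collapse μ X y := hyle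
      _ ≤ collapse μ X (ordValue (hvec i t₁)) := collapse_monoOn hyX hy1
    · intro t ht
      exact absurd ht (Set.notMem_empty _)
  refine ⟨fun t => Φ (hvec 0 t), fun t => Φ (hvec 1 t), fun t => Φ (hvec 2 t),
    hIncH 0, hIncH 1, hIncH 2, ?_⟩
  have hM : ∀ (i : Fin 3) (u : ζs.ToType),
      (![fun t => Φ (hvec 0 t), fun t => Φ (hvec 1 t), fun t => Φ (hvec 2 t)] i) u
        = Φ (hvec i u) := by
    intro i u; fin_cases i <;> rfl
  ext q
  simp only [qftp, Set.mem_setOf_eq]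
  rw [hM q.1 q.2.2.1, hM q.2.1 q.2.2.2]
  exact hΦlt _ _ (hXmem q.1 q.2.2.1) (hXmem q.2.1 q.2.2.2)


end Shelah734
end
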